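/- arXiv:1010.4071 — 7 statements merged into one kernel-verified Lean document; each statement's English description precedes it below -/
import Mathlib

section
/- Let u : V → W be a linear map between finite-dimensional real vector spaces and let f : V → ℤ be a polyhedral function. Then the pushforward u_!(f) : W → ℤ defined by u_!(f)(w) = I(f · 1_{u^{-1}(w)}) is a polyhedral function on W. (Here f · 1_{u^{-1}(w)} is the restriction of f to the fiber of u over w, extended by zero; it is a polyhedral function on V, so the integral is defined.) -/
/-- A polyhedral cell in a real vector space: a nonempty subset cut out by finitely many
affine-linear equalities and finitely many strict affine-linear inequalities. -/
def IsPolyhedralCell {W : Type*} [AddCommGroup W] [Module ℝ W] (C : Set W) : Prop :=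
  C.Nonempty ∧
    ∃ (p q : ℕ) (f : Fin p → (W →ᵃ[ℝ] ℝ)) (g : Fin q → (W →ᵃ[ℝ] ℝ)),
      C = {x | (∀ i, f i x = 0) ∧ ∀ j, 0 < g j x}

/-- The dimension of a subset of a real vector space: the dimension of its affine span. -/
noncomputable def cellDim {W : Type*} [AddCommGroup W] [Module ℝ W] (C : Set W) : ℕ :=
  Module.finrank ℝ (affineSpan ℝ C).direction

open Classical in
/-- The (integer-valued) indicator function of a set. -/
noncomputable def ind {W : Type*} (C : Set W) : W → ℤ := fun x => if x ∈ C then 1 else 0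

/-- The group of polyhedral functions on `W`: the subgroup of the additive group of
functions `W → ℤ` generated by indicator functions of polyhedral cells. -/
def PolF (W : Type*) [AddCommGroup W] [Module ℝ W] : AddSubgroup (W → ℤ) :=
  AddSubgroup.closure {f | ∃ C : Set W, IsPolyhedralCell C ∧ f = ind C}

theorem ind_mem_PolF {W : Type*} [AddCommGroup W] [Module ℝ W] {C : Set W}
    (hC : IsPolyhedralCell C) : ind C ∈ PolF W :=
  AddSubgroup.subset_closure ⟨C, hC, rfl⟩

/-- `I : PolF W →+ ℤ` is integration against Euler-characteristic measure if it sends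
the indicator function of every polyhedral cell `C` to `(-1) ^ dim C`. -/
def IsEulerHom {W : Type*} [AddCommGroup W] [Module ℝ W] (I : PolF W →+ ℤ) : Prop :=
  ∀ (C : Set W) (hC : IsPolyhedralCell C),
    I ⟨ind C, ind_mem_PolF hC⟩ = (-1) ^ cellDim C


section Helpers
variable {V W : Type*} [AddCommGroup V] [Module ℝ V] [AddCommGroup W] [Module ℝ W]

def cellSet {ι κ : Type} (f : ι → (V →ᵃ[ℝ] ℝ)) (g : κ → (V →ᵃ[ℝ] ℝ)) : Set V :=
  {x | (∀ i, f i x = 0) ∧ ∀ j, 0 < g j x}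

lemma mem_cellSet {ι κ : Type} {f : ι → (V →ᵃ[ℝ] ℝ)} {g : κ → (V →ᵃ[ℝ] ℝ)} {x : V} :
    x ∈ cellSet f g ↔ (∀ i, f i x = 0) ∧ ∀ j, 0 < g j x := Iff.rfl

lemma isPolyhedralCell_cellSet {ι κ : Type} [Fintype ι] [Fintype κ]
    (f : ι → (V →ᵃ[ℝ] ℝ)) (g : κ → (V →ᵃ[ℝ] ℝ)) (hne : (cellSet f g).Nonempty) :
    IsPolyhedralCell (cellSet f g) := by
  refine ⟨hne, Fintype.card ι, Fintype.card κ, f ∘ (Fintype.equivFin ι).symm,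
    g ∘ (Fintype.equivFin κ).symm, ?_⟩
  ext x
  simp only [cellSet, Set.mem_setOf_eq, Function.comp_apply]
  constructor
  · rintro ⟨h1, h2⟩; exact ⟨fun i => h1 _, fun j => h2 _⟩
  · rintro ⟨h1, h2⟩
    exact ⟨fun i => by simpa using h1 (Fintype.equivFin ι i),
      fun j => by simpa using h2 (Fintype.equivFin κ j)⟩

/-- one-dimensional Fourier–Motzkin feasibility -/
lemma exists_t {κ : Type} [Fintype κ] (a b : κ → ℝ)
    (h0 : ∀ j, b j = 0 → 0 < a j)
    (hpair : ∀ j k, 0 < b j → b k < 0 → 0 < b j * a k - b k * a j) :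
    ∃ t : ℝ, ∀ j, 0 < a j + t * b j := by
  classical
  set P : Finset κ := Finset.univ.filter (fun j => 0 < b j) with hP
  set N : Finset κ := Finset.univ.filter (fun j => b j < 0) with hN
  have hmemP : ∀ j, j ∈ P ↔ 0 < b j := by intro j; simp [hP]
  have hmemN : ∀ j, j ∈ N ↔ b j < 0 := by intro j; simp [hN]
  have hlow : ∀ j, 0 < b j → ∀ t : ℝ, -a j / b j < t → 0 < a j + t * b j := by
    intro j hj t ht
    rw [div_lt_iff₀ hj] at ht; linarith
  have hupp : ∀ k, b k < 0 → ∀ t : ℝ, t < -a k / b k → 0 < a k + t * b k := by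
    intro k hk t ht
    rw [lt_div_iff_of_neg hk] at ht; linarith
  have horder : ∀ j ∈ P, ∀ k ∈ N, -a j / b j < -a k / b k := by
    intro j hj k hk
    rw [hmemP] at hj; rw [hmemN] at hk
    have h := hpair j k hj hk
    rw [div_lt_iff₀ hj, div_mul_eq_mul_div, lt_div_iff_of_neg hk]
    nlinarith
  -- choose t
  by_cases hPn : P.Nonempty
  · by_cases hNn : N.Nonempty
    · set L := P.sup' hPn (fun j => -a j / b j)
      set U := N.inf' hNn (fun k => -a k / b k)
      have hLU : L < U := by
        rw [Finset.sup'_lt_iff]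
        intro j hj
        rw [Finset.lt_inf'_iff]
        intro k hk
        exact horder j hj k hk
      refine ⟨(L + U) / 2, fun j => ?_⟩
      rcases lt_trichotomy (b j) 0 with h | h | h
      · refine hupp j h _ ?_
        have : U ≤ -a j / b j := Finset.inf'_le _ ((hmemN j).2 h)
        linarith
      · simpa [h] using h0 j h
      · refine hlow j h _ ?_
        have : -a j / b j ≤ L := Finset.le_sup' (f := fun j => -a j / b j) ((hmemP j).2 h)
        linarith
    · refine ⟨P.sup' hPn (fun j => -a j / b j) + 1, fun j => ?_⟩
      rcases lt_trichotomy (b j) 0 with h | h | h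
      · exact absurd ⟨j, (hmemN j).2 h⟩ hNn
      · simpa [h] using h0 j h
      · refine hlow j h _ ?_
        have : -a j / b j ≤ P.sup' hPn (fun j => -a j / b j) := Finset.le_sup' (f := fun j => -a j / b j) ((hmemP j).2 h)
        linarith
  · by_cases hNn : N.Nonempty
    · refine ⟨N.inf' hNn (fun k => -a k / b k) - 1, fun j => ?_⟩
      rcases lt_trichotomy (b j) 0 with h | h | h
      · refine hupp j h _ ?_
        have : N.inf' hNn (fun k => -a k / b k) ≤ -a j / b j := Finset.inf'_le _ ((hmemN j).2 h)
        linarith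
      · simpa [h] using h0 j h
      · exact absurd ⟨j, (hmemP j).2 h⟩ hPn
    · refine ⟨0, fun j => ?_⟩
      rcases lt_trichotomy (b j) 0 with h | h | h
      · exact absurd ⟨j, (hmemN j).2 h⟩ hNn
      · simpa [h] using h0 j h
      · exact absurd ⟨j, (hmemP j).2 h⟩ hPn

end Helpers


section Span
variable {V : Type*} [AddCommGroup V] [Module ℝ V]

lemma mem_affineSpan_cellSet {ι κ : Type} [Fintype κ]
    (f : ι → (V →ᵃ[ℝ] ℝ)) (g : κ → (V →ᵃ[ℝ] ℝ)) {x0 : V} (hx0 : x0 ∈ cellSet f g)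
    {y : V} (hy : ∀ i, f i y = 0) : y ∈ affineSpan ℝ (cellSet f g) := by
  classical
  set hval : Option κ → ℝ :=
    fun o => o.elim 1 (fun j => if g j x0 ≤ g j y then 1 else g j x0 / (g j x0 - g j y)) with hhval
  have hpos : ∀ o, 0 < hval o := by
    rintro (_ | j)
    · norm_num [hhval]
    · simp only [hhval, Option.elim]
      split_ifs with h
      · norm_num
      · push_neg at h
        exact div_pos (hx0.2 j) (by linarith)
  set m : ℝ := Finset.univ.inf' Finset.univ_nonempty hval with hm
  have hm0 : 0 < m := by
    rw [hm, Finset.lt_inf'_iff]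
    exact fun o _ => hpos o
  set t : ℝ := m / 2 with htdef
  have ht0 : 0 < t := by positivity
  set z : V := AffineMap.lineMap x0 y t with hz
  have hzline : ∀ (F : V →ᵃ[ℝ] ℝ), F z = F x0 + t * (F y - F x0) := by
    intro F
    rw [hz, AffineMap.apply_lineMap, AffineMap.lineMap_apply]
    simp [vsub_eq_sub]
    ring
  have hzmem : z ∈ cellSet f g := by
    constructor
    · intro i; rw [hzline (f i), hx0.1 i, hy i]; ring
    · intro j
      rw [hzline (g j)]
      by_cases hle : g j x0 ≤ g j y
      · nlinarith [hx0.2 j, ht0]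
      · push_neg at hle
        have hmj : m ≤ hval (some j) := Finset.inf'_le hval (Finset.mem_univ _)
        have : t < g j x0 / (g j x0 - g j y) := by
          have : hval (some j) = g j x0 / (g j x0 - g j y) := by
            simp [hhval, not_le.2 hle]
          rw [this] at hmj; linarith
        rw [lt_div_iff₀ (by linarith)] at this
        nlinarith
  have h1 : z ∈ affineSpan ℝ (cellSet f g) := subset_affineSpan ℝ _ hzmem
  have h2 : x0 ∈ affineSpan ℝ (cellSet f g) := subset_affineSpan ℝ _ hx0
  have hy' : y = (1 / t) • (z -ᵥ x0) +ᵥ x0 := by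
    rw [hz, AffineMap.lineMap_apply]
    simp only [vsub_eq_sub, vadd_eq_add, add_sub_cancel_right]
    rw [smul_smul, one_div, inv_mul_cancel₀ (ne_of_gt ht0), one_smul]
    abel
  rw [hy']
  exact AffineSubspace.smul_vsub_vadd_mem _ (1 / t) h1 h2 h2

lemma direction_cellSet {ι κ : Type} [Fintype κ]
    (f : ι → (V →ᵃ[ℝ] ℝ)) (g : κ → (V →ᵃ[ℝ] ℝ)) (hne : (cellSet f g).Nonempty) :
    (affineSpan ℝ (cellSet f g)).direction = ⨅ i, LinearMap.ker (f i).linear := by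
  obtain ⟨x0, hx0⟩ := hne
  apply le_antisymm
  · rw [direction_affineSpan, vectorSpan_def, Submodule.span_le]
    rintro v ⟨p1, hp1, p2, hp2, rfl⟩
    simp only [SetLike.mem_coe, Submodule.mem_iInf, LinearMap.mem_ker]
    intro i
    have h := AffineMap.linearMap_vsub (f i) p1 p2
    rw [hp1.1 i, hp2.1 i] at h
    simpa using h
  · intro v hv
    rw [Submodule.mem_iInf] at hv
    have hy : ∀ i, f i (v + x0) = 0 := by
      intro i
      have h := (f i).map_vadd x0 v
      simp only [vadd_eq_add] at h
      rw [h]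
      have := hv i
      rw [LinearMap.mem_ker] at this
      rw [this, hx0.1 i]
      simp
    have h1 : (v + x0) ∈ affineSpan ℝ (cellSet f g) := mem_affineSpan_cellSet f g hx0 hy
    have h2 : x0 ∈ affineSpan ℝ (cellSet f g) := subset_affineSpan ℝ _ hx0
    have h3 := AffineSubspace.vsub_mem_direction h1 h2
    simpa [vsub_eq_sub] using h3

end Span


section Fiber
variable {V W : Type*} [AddCommGroup V] [Module ℝ V] [AddCommGroup W] [Module ℝ W]
  [FiniteDimensional ℝ W]

noncomputable def fiberMaps (u : V →ₗ[ℝ] W) (w : W) :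
    Fin (Module.finrank ℝ W) → (V →ᵃ[ℝ] ℝ) :=
  fun k => (((Module.finBasis ℝ W).coord k).comp u).toAffineMap -
    AffineMap.const ℝ V ((Module.finBasis ℝ W).coord k w)

lemma fiberMaps_apply (u : V →ₗ[ℝ] W) (w : W) (k) (x : V) :
    fiberMaps u w k x = (Module.finBasis ℝ W).coord k (u x) - (Module.finBasis ℝ W).coord k w := by
  simp [fiberMaps]

lemma fiberMaps_zero_iff (u : V →ₗ[ℝ] W) (w : W) (x : V) :
    (∀ k, fiberMaps u w k x = 0) ↔ u x = w := by
  simp only [fiberMaps_apply, sub_eq_zero, Module.Basis.coord_apply]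
  exact (Module.Basis.ext_elem_iff _).symm

lemma fiberMaps_linear (u : V →ₗ[ℝ] W) (w : W) (k) :
    (fiberMaps u w k).linear = ((Module.finBasis ℝ W).coord k).comp u := by
  simp [fiberMaps]

lemma iInf_ker_fiberMaps (u : V →ₗ[ℝ] W) (w : W) :
    ⨅ k, LinearMap.ker (fiberMaps u w k).linear = LinearMap.ker u := by
  ext v
  simp only [Submodule.mem_iInf, LinearMap.mem_ker, fiberMaps_linear, LinearMap.comp_apply,
    Module.Basis.coord_apply]
  rw [show (u v = 0 ↔ ∀ k, (Module.finBasis ℝ W).repr (u v) k = 0) from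
    by rw [Module.Basis.ext_elem_iff (Module.finBasis ℝ W) (y := 0)]; simp]

lemma cellSet_inter_fiber {ι κ : Type} (f : ι → (V →ᵃ[ℝ] ℝ)) (g : κ → (V →ᵃ[ℝ] ℝ))
    (u : V →ₗ[ℝ] W) (w : W) :
    cellSet f g ∩ u ⁻¹' {w} = cellSet (Sum.elim f (fiberMaps u w)) g := by
  ext x
  simp only [Set.mem_inter_iff, Set.mem_preimage, Set.mem_singleton_iff, mem_cellSet, Sum.forall,
    Sum.elim_inl, Sum.elim_inr, fiberMaps_zero_iff]
  tauto

end Fiber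

section ImageBase
variable {V W : Type*} [AddCommGroup V] [Module ℝ V] [AddCommGroup W] [Module ℝ W]
  [FiniteDimensional ℝ W]

lemma image_cellSet_of_disjoint (u : V →ₗ[ℝ] W) {ι κ : Type} [Fintype ι] [Fintype κ]
    (f : ι → (V →ᵃ[ℝ] ℝ)) (g : κ → (V →ᵃ[ℝ] ℝ)) (hne : (cellSet f g).Nonempty)
    (hbot : LinearMap.ker u ⊓ ⨅ i, LinearMap.ker (f i).linear = ⊥) :
    IsPolyhedralCell (u '' cellSet f g) := by
  classical
  obtain ⟨x0, hx0⟩ := hne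
  set D : Submodule ℝ V := ⨅ i, LinearMap.ker (f i).linear with hD
  set uD : D →ₗ[ℝ] W := u.comp D.subtype with huD
  have hinj : Function.Injective uD := by
    apply LinearMap.ker_eq_bot.1
    rw [Submodule.eq_bot_iff]
    intro v hv
    rw [LinearMap.mem_ker, huD, LinearMap.comp_apply] at hv
    have hmem : (v : V) ∈ LinearMap.ker u ⊓ D := ⟨hv, v.2⟩
    rw [hbot] at hmem
    exact Subtype.ext (by simpa using hmem)
  set eqv := LinearEquiv.ofInjective uD hinj with heqv
  obtain ⟨Q, hQ⟩ := Submodule.exists_isCompl (LinearMap.range uD)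
  set π := (LinearMap.range uD).linearProjOfIsCompl Q hQ with hπ
  set σ : W →ₗ[ℝ] V := D.subtype ∘ₗ (eqv.symm : LinearMap.range uD →ₗ[ℝ] D) ∘ₗ π with hσdef
  have hσ : ∀ v : V, v ∈ D → σ (u v) = v := by
    intro v hv
    have h1 : u v = uD ⟨v, hv⟩ := rfl
    have h2 : π (uD ⟨v, hv⟩) = ⟨uD ⟨v, hv⟩, LinearMap.mem_range_self _ _⟩ :=
      Submodule.linearProjOfIsCompl_apply_left hQ ⟨uD ⟨v, hv⟩, LinearMap.mem_range_self _ _⟩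
    have h3 : eqv.symm ⟨uD ⟨v, hv⟩, LinearMap.mem_range_self _ _⟩ = ⟨v, hv⟩ := by
      rw [LinearEquiv.symm_apply_eq]
      exact Subtype.ext (by simp [heqv, LinearEquiv.ofInjective_apply])
    rw [h1, hσdef]
    simp only [LinearMap.comp_apply]
    rw [h2]
    simp only [LinearEquiv.coe_coe]
    rw [h3]
    rfl
  set r : W →ᵃ[ℝ] V := σ.toAffineMap + AffineMap.const ℝ W (x0 - σ (u x0)) with hrdef
  have hr : ∀ w : W, r w = σ w + (x0 - σ (u x0)) := by
    intro w; simp [hrdef]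
  have key : ∀ x ∈ cellSet f g, r (u x) = x := by
    intro x hx
    have hxd : x - x0 ∈ D := by
      rw [hD, Submodule.mem_iInf]
      intro i
      rw [LinearMap.mem_ker]
      have h := AffineMap.linearMap_vsub (f i) x x0
      rw [hx.1 i, hx0.1 i] at h
      simpa [vsub_eq_sub] using h
    have h2 : σ (u x) - σ (u x0) = x - x0 := by
      rw [← map_sub, ← map_sub, hσ _ hxd]
    have h3 : σ (u x) + (x0 - σ (u x0)) = (σ (u x) - σ (u x0)) + x0 := by abel
    rw [hr, h3, h2]
    abel
  set b := Module.finBasis ℝ W with hb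
  set F : ι ⊕ Fin (Module.finrank ℝ W) → (W →ᵃ[ℝ] ℝ) :=
    Sum.elim (fun i => (f i).comp r)
      (fun k => ((b.coord k).comp u).toAffineMap.comp r - (b.coord k).toAffineMap) with hF
  set G : κ → (W →ᵃ[ℝ] ℝ) := fun j => (g j).comp r with hG
  have himg : u '' cellSet f g = cellSet F G := by
    ext w
    constructor
    · rintro ⟨x, hx, rfl⟩
      have hrx : r (u x) = x := key x hx
      refine ⟨?_, ?_⟩
      · rintro (i | k)
        · simpa [hF, hrx] using hx.1 i
        · simp [hF, hrx]
      · intro j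
        simpa [hG, hrx] using hx.2 j
    · rintro ⟨h1, h2⟩
      have hx : r w ∈ cellSet f g := by
        refine ⟨fun i => ?_, fun j => ?_⟩
        · simpa [hF] using h1 (Sum.inl i)
        · simpa [hG] using h2 j
      have huw : u (r w) = w := by
        rw [Module.Basis.ext_elem_iff b]
        intro k
        have h := h1 (Sum.inr k)
        simp only [hF, Sum.elim_inr, AffineMap.coe_sub, Pi.sub_apply, AffineMap.comp_apply,
          LinearMap.coe_toAffineMap, LinearMap.comp_apply, sub_eq_zero, Module.Basis.coord_apply] at h
        exact h
      exact ⟨r w, hx, huw⟩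
  rw [himg]
  exact isPolyhedralCell_cellSet F G (himg ▸ ⟨u x0, x0, hx0, rfl⟩)
end ImageBase


section ImageMain
variable {V W : Type*} [AddCommGroup V] [Module ℝ V] [FiniteDimensional ℝ V]
  [AddCommGroup W] [Module ℝ W] [FiniteDimensional ℝ W]

set_option maxHeartbeats 1000000 in
lemma image_cellSet_isPolyhedralCell (u : V →ₗ[ℝ] W) (n : ℕ) :
    ∀ {ι κ : Type} [Fintype ι] [Fintype κ] (f : ι → (V →ᵃ[ℝ] ℝ)) (g : κ → (V →ᵃ[ℝ] ℝ)),
    Module.finrank ℝ ↥(LinearMap.ker u ⊓ ⨅ i, LinearMap.ker (f i).linear) ≤ n →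
    (cellSet f g).Nonempty → IsPolyhedralCell (u '' cellSet f g) := by
  induction n with
  | zero =>
    intro ι κ _ _ f g hrk hne
    exact image_cellSet_of_disjoint u f g hne (Submodule.finrank_eq_zero.1 (Nat.le_zero.1 hrk))
  | succ n IH =>
    intro ι κ _ _ f g hrk hne
    classical
    by_cases hzero : LinearMap.ker u ⊓ ⨅ i, LinearMap.ker (f i).linear = ⊥
    · exact image_cellSet_of_disjoint u f g hne hzero
    · obtain ⟨e, he, hene⟩ := (Submodule.ne_bot_iff _).1 hzero
      have heu : u e = 0 := he.1
      have hef : ∀ i, (f i).linear e = 0 := by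
        have h : e ∈ (⨅ i, LinearMap.ker (f i).linear : Submodule ℝ V) := he.2
        rw [Submodule.mem_iInf] at h
        exact fun i => h i
      -- a functional with φ e = 1
      obtain ⟨Q, hQ⟩ := Submodule.exists_isCompl (Submodule.span ℝ {e})
      set ψ := (Submodule.span ℝ {e}).linearProjOfIsCompl Q hQ with hψ
      set eq1 := LinearEquiv.toSpanNonzeroSingleton ℝ V e hene with heq1
      set φ : V →ₗ[ℝ] ℝ := (eq1.symm : Submodule.span ℝ {e} →ₗ[ℝ] ℝ) ∘ₗ ψ with hφdef
      have hφe : φ e = 1 := by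
        have h1 : ψ e = ⟨e, Submodule.mem_span_singleton_self e⟩ :=
          Submodule.linearProjOfIsCompl_apply_left hQ ⟨e, Submodule.mem_span_singleton_self e⟩
        have h2 : eq1.symm ⟨e, Submodule.mem_span_singleton_self e⟩ = 1 := by
          rw [LinearEquiv.symm_apply_eq]
          exact Subtype.ext (by simp [heq1, LinearEquiv.toSpanNonzeroSingleton])
        rw [hφdef]
        simp only [LinearMap.comp_apply]
        rw [h1]
        simpa using h2
      set bc : κ → ℝ := fun j => (g j).linear e with hbc
      set f' : Option ι → (V →ᵃ[ℝ] ℝ) := fun o => o.elim φ.toAffineMap f with hf'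
      set g' : κ ⊕ (κ × κ) → (V →ᵃ[ℝ] ℝ) := Sum.elim
        (fun j => if bc j = 0 then g j else AffineMap.const ℝ V 1)
        (fun jk => if 0 < bc jk.1 ∧ bc jk.2 < 0 then bc jk.1 • g jk.2 - bc jk.2 • g jk.1
          else AffineMap.const ℝ V 1) with hg'
      have haff : ∀ (F : V →ᵃ[ℝ] ℝ) (x : V) (s : ℝ), F (x + s • e) = F x + s * F.linear e := by
        intro F x s
        have h : x + s • e = (s • e) +ᵥ x := by rw [vadd_eq_add, add_comm]
        rw [h, F.map_vadd]
        simp only [vadd_eq_add, map_smul, smul_eq_mul]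
        ring
      set p : V → V := fun x => x - φ x • e with hp
      have hclaim : p '' cellSet f g = cellSet f' g' := by
        apply Set.Subset.antisymm
        · rintro z ⟨x, hx, rfl⟩
          have hpx : p x = x + (-φ x) • e := by rw [hp]; simp [sub_eq_add_neg, neg_smul]
          constructor
          · rintro (_ | i)
            · show φ.toAffineMap (p x) = 0
              simp only [LinearMap.coe_toAffineMap]
              rw [hp]
              simp [map_sub, map_smul, hφe, smul_eq_mul]
            · show f i (p x) = 0
              rw [hpx, haff, hef i, hx.1 i]; ring
          · rintro (j | ⟨j, k⟩)
            · show (if bc j = 0 then g j else AffineMap.const ℝ V 1) (p x) > 0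
              split_ifs with h
              · rw [hpx, haff]
                rw [show (g j).linear e = bc j from rfl, h]
                simpa using hx.2 j
              · simp
            · show (if 0 < bc j ∧ bc k < 0 then bc j • g k - bc k • g j
                  else AffineMap.const ℝ V 1) (p x) > 0
              split_ifs with h
              · have hk : g k (p x) = g k x + (-φ x) * bc k := by rw [hpx, haff]
                have hj : g j (p x) = g j x + (-φ x) * bc j := by rw [hpx, haff]
                simp only [AffineMap.coe_sub, AffineMap.coe_smul, Pi.sub_apply, Pi.smul_apply,
                  smul_eq_mul]
                rw [hk, hj]
                nlinarith [hx.2 j, hx.2 k, h.1, h.2]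
              · simp
        · intro z hz
          have hφz : φ z = 0 := by
            have h := hz.1 none
            simpa [hf'] using h
          have h0 : ∀ j, bc j = 0 → 0 < g j z := by
            intro j hj
            have h := hz.2 (Sum.inl j)
            simpa [hg', hj] using h
          have hpair : ∀ j k, 0 < bc j → bc k < 0 → 0 < bc j * g k z - bc k * g j z := by
            intro j k hjp hkn
            have h := hz.2 (Sum.inr (j, k))
            have hif : g' (Sum.inr (j, k)) = bc j • g k - bc k • g j := by
              simp only [hg', Sum.elim_inr]
              exact if_pos ⟨hjp, hkn⟩
            rw [hif] at h
            simp only [AffineMap.coe_sub, AffineMap.coe_smul, Pi.sub_apply, Pi.smul_apply,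
              smul_eq_mul] at h
            linarith
          obtain ⟨t, ht⟩ := exists_t (fun j => g j z) bc h0 hpair
          refine ⟨z + t • e, ⟨fun i => ?_, fun j => ?_⟩, ?_⟩
          · rw [haff, hef i]
            have h := hz.1 (some i)
            simpa [hf'] using h
          · rw [haff]
            exact ht j
          · rw [hp]
            simp only [map_add, map_smul, hφe, smul_eq_mul, hφz, mul_one]
            rw [zero_add]
            abel
      have himg2 : u '' cellSet f g = u '' cellSet f' g' := by
        rw [← hclaim, Set.image_image]
        apply Set.image_congr
        intro x _
        rw [hp]
        simp [map_sub, map_smul, heu]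
      have hiInf' : (⨅ o, LinearMap.ker (f' o).linear) =
          LinearMap.ker φ ⊓ ⨅ i, LinearMap.ker (f i).linear := by
        rw [iInf_option]
        congr 1
      have hlt : LinearMap.ker u ⊓ (LinearMap.ker φ ⊓ ⨅ i, LinearMap.ker (f i).linear) <
          LinearMap.ker u ⊓ ⨅ i, LinearMap.ker (f i).linear := by
        apply lt_of_le_of_ne (inf_le_inf_left _ inf_le_right)
        intro hEq
        have hmem : e ∈ LinearMap.ker u ⊓
            (LinearMap.ker φ ⊓ ⨅ i, LinearMap.ker (f i).linear) := hEq ▸ he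
        have hφe0 : φ e = 0 := hmem.2.1
        rw [hφe] at hφe0
        norm_num at hφe0
      have hrk' : Module.finrank ℝ
          ↥(LinearMap.ker u ⊓ ⨅ o, LinearMap.ker (f' o).linear) ≤ n := by
        rw [hiInf']
        have h1 := Submodule.finrank_lt_finrank_of_lt hlt
        omega
      have hne' : (cellSet f' g').Nonempty := by
        rw [← hclaim]
        exact hne.image p
      rw [himg2]
      exact IH f' g' hrk' hne'
end ImageMain


section Ind
variable {V : Type*}

lemma ind_mul_ind (C D : Set V) : (fun x => ind C x * ind D x) = ind (C ∩ D) := by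
  classical
  funext x
  by_cases hC : x ∈ C <;> by_cases hD : x ∈ D <;> simp [ind, hC, hD]

lemma ind_empty : ind (∅ : Set V) = (0 : V → ℤ) := by
  funext x; simp [ind]

end Ind

/-- Pushforward of polyhedral functions along a linear map: if
`u : V → W` is linear and `f ∈ PolF V`, then `w ↦ I(f · 1_{u⁻¹(w)})` is a polyhedral
function on `W`. -/
theorem statement8 (V W : Type*) [AddCommGroup V] [Module ℝ V] [FiniteDimensional ℝ V]
    [AddCommGroup W] [Module ℝ W] [FiniteDimensional ℝ W]
    (I : PolF V →+ ℤ) (hI : IsEulerHom I)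
    (u : V →ₗ[ℝ] W) (f : V → ℤ) (hf : f ∈ PolF V) :
    ∃ hfib : ∀ w : W, (fun x => f x * ind (u ⁻¹' {w}) x) ∈ PolF V,
      (fun w : W => I ⟨fun x => f x * ind (u ⁻¹' {w}) x, hfib w⟩) ∈ PolF W := by
  classical
  refine AddSubgroup.closure_induction (k := {f | ∃ C : Set V, IsPolyhedralCell C ∧ f = ind C})
    (p := fun f _ => ∃ hfib : ∀ w : W, (fun x => f x * ind (u ⁻¹' {w}) x) ∈ PolF V,
      (fun w : W => I ⟨fun x => f x * ind (u ⁻¹' {w}) x, hfib w⟩) ∈ PolF W)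
    ?_ ?_ ?_ ?_ hf
  · -- generators
    rintro f ⟨C, ⟨hne, p, q, fs, gs, hCeq⟩, rfl⟩
    have hC' : C = cellSet fs gs := hCeq
    subst hC'
    set d := Module.finrank ℝ ↥(LinearMap.ker u ⊓ ⨅ i, LinearMap.ker (fs i).linear) with hd
    have hfib : ∀ w : W, (fun x => ind (cellSet fs gs) x * ind (u ⁻¹' {w}) x) ∈ PolF V := by
      intro w
      rw [ind_mul_ind]
      by_cases hne' : (cellSet fs gs ∩ u ⁻¹' {w}).Nonempty
      · rw [cellSet_inter_fiber]
        exact ind_mem_PolF (isPolyhedralCell_cellSet _ _ (cellSet_inter_fiber fs gs u w ▸ hne'))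
      · rw [Set.not_nonempty_iff_eq_empty.1 hne', ind_empty]
        exact zero_mem _
    refine ⟨hfib, ?_⟩
    have himgcell : IsPolyhedralCell (u '' cellSet fs gs) :=
      image_cellSet_isPolyhedralCell u d fs gs le_rfl hne
    have heq : (fun w : W => I ⟨fun x => ind (cellSet fs gs) x * ind (u ⁻¹' {w}) x, hfib w⟩)
        = ((-1 : ℤ) ^ d) • ind (u '' cellSet fs gs) := by
      funext w
      by_cases hw : w ∈ u '' cellSet fs gs
      · have hne' : (cellSet fs gs ∩ u ⁻¹' {w}).Nonempty := by
          obtain ⟨x, hx, rfl⟩ := hw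
          exact ⟨x, hx, rfl⟩
        have hne'' : (cellSet (Sum.elim fs (fiberMaps u w)) gs).Nonempty := by
          rw [← cellSet_inter_fiber]; exact hne'
        have hcell : IsPolyhedralCell (cellSet (Sum.elim fs (fiberMaps u w)) gs) :=
          isPolyhedralCell_cellSet _ _ hne''
        have hsub : (⟨fun x => ind (cellSet fs gs) x * ind (u ⁻¹' {w}) x, hfib w⟩ : PolF V)
            = ⟨ind (cellSet (Sum.elim fs (fiberMaps u w)) gs), ind_mem_PolF hcell⟩ := by
          apply Subtype.ext
          show (fun x => ind (cellSet fs gs) x * ind (u ⁻¹' {w}) x)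
            = ind (cellSet (Sum.elim fs (fiberMaps u w)) gs)
          rw [ind_mul_ind, cellSet_inter_fiber]
        rw [hsub, hI _ hcell]
        have hdim : cellDim (cellSet (Sum.elim fs (fiberMaps u w)) gs) = d := by
          show Module.finrank ℝ _ = d
          rw [direction_cellSet _ _ hne'', iInf_sum]
          simp only [Sum.elim_inl, Sum.elim_inr]
          have e : (⨅ i, LinearMap.ker (fs i).linear) ⊓ ⨅ j, LinearMap.ker (fiberMaps u w j).linear
              = LinearMap.ker u ⊓ ⨅ i, LinearMap.ker (fs i).linear := by
            rw [iInf_ker_fiberMaps, inf_comm]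
          exact congrArg (fun S : Submodule ℝ V => Module.finrank ℝ S) e
        rw [hdim]
        have hindw : ind (u '' cellSet fs gs) w = 1 := by simp [ind, hw]
        rw [Pi.smul_apply, hindw, smul_eq_mul, mul_one]
      · have hempty : cellSet fs gs ∩ u ⁻¹' {w} = ∅ := by
          ext x
          simp only [Set.mem_inter_iff, Set.mem_preimage, Set.mem_singleton_iff,
            Set.mem_empty_iff_false, iff_false, not_and]
          intro hx hux
          exact hw ⟨x, hx, hux⟩
        have hsub : (⟨fun x => ind (cellSet fs gs) x * ind (u ⁻¹' {w}) x, hfib w⟩ : PolF V)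
            = 0 := by
          apply Subtype.ext
          show (fun x => ind (cellSet fs gs) x * ind (u ⁻¹' {w}) x) = (0 : V → ℤ)
          rw [ind_mul_ind, hempty, ind_empty]
        rw [hsub, map_zero]
        have hindw : ind (u '' cellSet fs gs) w = 0 := by simp [ind, hw]
        rw [Pi.smul_apply, hindw, smul_eq_mul, mul_zero]
    rw [heq]
    exact AddSubgroup.zsmul_mem _ (ind_mem_PolF himgcell) _
  · -- zero
    have h0 : ∀ w : W, (fun x => (0 : V → ℤ) x * ind (u ⁻¹' {w}) x) = 0 := by
      intro w; funext x; simp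
    refine ⟨fun w => by rw [h0 w]; exact zero_mem _, ?_⟩
    have : (fun w : W => I ⟨fun x => (0 : V → ℤ) x * ind (u ⁻¹' {w}) x, by
        rw [h0 w]; exact zero_mem _⟩) = 0 := by
      funext w
      rw [show (⟨fun x => (0 : V → ℤ) x * ind (u ⁻¹' {w}) x, by rw [h0 w]; exact zero_mem _⟩ :
        PolF V) = 0 from Subtype.ext (h0 w), map_zero]
      rfl
    rw [this]
    exact zero_mem _
  · -- add
    rintro x y hx hy ⟨hfx, hpx⟩ ⟨hfy, hpy⟩
    have hadd : ∀ w : W, (fun v => (x + y) v * ind (u ⁻¹' {w}) v)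
        = (fun v => x v * ind (u ⁻¹' {w}) v) + (fun v => y v * ind (u ⁻¹' {w}) v) := by
      intro w; funext v; simp [Pi.add_apply]; ring
    have hfib : ∀ w : W, (fun v => (x + y) v * ind (u ⁻¹' {w}) v) ∈ PolF V := by
      intro w; rw [hadd w]; exact add_mem (hfx w) (hfy w)
    refine ⟨hfib, ?_⟩
    have : (fun w : W => I ⟨fun v => (x + y) v * ind (u ⁻¹' {w}) v, hfib w⟩)
        = (fun w : W => I ⟨fun v => x v * ind (u ⁻¹' {w}) v, hfx w⟩)
          + (fun w : W => I ⟨fun v => y v * ind (u ⁻¹' {w}) v, hfy w⟩) := by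
      funext w
      rw [show (⟨fun v => (x + y) v * ind (u ⁻¹' {w}) v, hfib w⟩ : PolF V)
        = ⟨fun v => x v * ind (u ⁻¹' {w}) v, hfx w⟩ + ⟨fun v => y v * ind (u ⁻¹' {w}) v, hfy w⟩
        from Subtype.ext (hadd w), map_add]
      rfl
    rw [this]
    exact add_mem hpx hpy
  · -- neg
    rintro x hx ⟨hfx, hpx⟩
    have hneg : ∀ w : W, (fun v => (-x) v * ind (u ⁻¹' {w}) v)
        = -(fun v => x v * ind (u ⁻¹' {w}) v) := by
      intro w; funext v; simp
    have hfib : ∀ w : W, (fun v => (-x) v * ind (u ⁻¹' {w}) v) ∈ PolF V := by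
      intro w; rw [hneg w]; exact neg_mem (hfx w)
    refine ⟨hfib, ?_⟩
    have : (fun w : W => I ⟨fun v => (-x) v * ind (u ⁻¹' {w}) v, hfib w⟩)
        = -(fun w : W => I ⟨fun v => x v * ind (u ⁻¹' {w}) v, hfx w⟩) := by
      funext w
      rw [show (⟨fun v => (-x) v * ind (u ⁻¹' {w}) v, hfib w⟩ : PolF V)
        = -⟨fun v => x v * ind (u ⁻¹' {w}) v, hfx w⟩ from Subtype.ext (hneg w), map_neg]
      rfl
    rw [this]
    exact neg_mem hpx
end

section
/- Let V be a finite-dimensional real vector space and let P, Q ⊆ V be nonempty compact convex polytopes (convex hulls of nonempty finite sets). Then for every x ∈ V, the Euler-characteristic convolution (1_P ⋆ 1_Q)(x) := I applied to the polyhedral function y ↦ 1_P(y)·1_Q(x − y) (i.e. I(1_{P ∩ (x − Q)})) equals 1 if x lies in the Minkowski sum P + Q and equals 0 otherwise. In other words, 1_P ⋆ 1_Q = 1_{P+Q}. -/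
section Dev
variable {V : Type*} [AddCommGroup V] [Module ℝ V]

/-- an affine "H-set": finite intersection of closed affine halfspaces. -/
def IsHSet (X : Set V) : Prop :=
  ∃ (ι : Type) (_ : Finite ι) (g : ι → (V →ᵃ[ℝ] ℝ)), X = {x | ∀ i, 0 ≤ g i x}

theorem isHSet_inter {X Y : Set V} (hX : IsHSet X) (hY : IsHSet Y) : IsHSet (X ∩ Y) := by
  obtain ⟨ι, _, g, rfl⟩ := hX
  obtain ⟨κ, _, h, rfl⟩ := hY
  refine ⟨ι ⊕ κ, inferInstance, Sum.elim g h, ?_⟩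
  ext x
  simp [Sum.forall]

theorem isHSet_iInter {κ : Type} [Finite κ] {X : κ → Set V} (h : ∀ j, IsHSet (X j)) :
    IsHSet (⋂ j, X j) := by
  choose ι hfin g hg using h
  refine ⟨Σ j, ι j, inferInstance, fun p => g p.1 p.2, ?_⟩
  ext x
  simp only [Set.mem_iInter, Set.mem_setOf_eq, Sigma.forall]
  constructor
  · intro hx j i; have := hx j; rw [hg j] at this; exact this i
  · intro hx j; rw [hg j]; intro i; exact hx j i

theorem isHSet_preimage {W : Type*} [AddCommGroup W] [Module ℝ W]
    (f : W →ᵃ[ℝ] V) {X : Set V} (hX : IsHSet X) : IsHSet (f ⁻¹' X) := by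
  obtain ⟨ι, _, g, rfl⟩ := hX
  exact ⟨ι, inferInstance, fun i => (g i).comp f, by ext x; simp⟩

theorem isHSet_image_equiv {W : Type*} [AddCommGroup W] [Module ℝ W]
    (f : W ≃ᵃ[ℝ] V) {X : Set W} (hX : IsHSet X) : IsHSet (f '' X) := by
  obtain ⟨ι, _, g, rfl⟩ := hX
  refine ⟨ι, inferInstance, fun i => (g i).comp (f.symm : V →ᵃ[ℝ] W), ?_⟩
  ext x
  simp only [Set.mem_image, Set.mem_setOf_eq, AffineMap.comp_apply]
  constructor
  · rintro ⟨w, hw, rfl⟩; intro i; simpa using hw i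
  · intro hx; exact ⟨f.symm x, fun i => by simpa using hx i, by simp⟩

theorem isHSet_setOf_linear_le (L : V →ₗ[ℝ] ℝ) (c : ℝ) : IsHSet {x | L x ≤ c} := by
  refine ⟨Unit, inferInstance, fun _ => AffineMap.const ℝ V c - L.toAffineMap, ?_⟩
  ext x
  simp [sub_nonneg]

theorem isHSet_setOf_linear_ge (L : V →ₗ[ℝ] ℝ) (c : ℝ) : IsHSet {x | c ≤ L x} := by
  refine ⟨Unit, inferInstance, fun _ => L.toAffineMap - AffineMap.const ℝ V c, ?_⟩
  ext x
  simp [sub_nonneg]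

theorem isHSet_setOf_linear_eq (L : V →ₗ[ℝ] ℝ) (c : ℝ) : IsHSet {x | L x = c} := by
  have : {x : V | L x = c} = {x | L x ≤ c} ∩ {x | c ≤ L x} := by
    ext x; simp [le_antisymm_iff]
  rw [this]
  exact isHSet_inter (isHSet_setOf_linear_le L c) (isHSet_setOf_linear_ge L c)

theorem fm_core {X : Set (ℝ × V)} (hX : IsHSet X) : IsHSet (Prod.snd '' X) := by
  classical
  obtain ⟨ι, _, g, rfl⟩ := hX
  set a : ι → (V →ᵃ[ℝ] ℝ) := fun i => (g i).comp (LinearMap.inr ℝ ℝ V).toAffineMap with ha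
  set cc : ι → ℝ := fun i => (g i).linear ((1:ℝ), (0:V)) with hcc
  have key : ∀ (i : ι) (t : ℝ) (w : V), g i (t, w) = a i w + t * cc i := by
    intro i t w
    have h1 : ((t, w) : ℝ × V) = (t • ((1:ℝ), (0:V))) +ᵥ (((0:ℝ), w) : ℝ × V) := by
      simp [Prod.ext_iff]
    rw [h1, AffineMap.map_vadd, map_smul]
    simp [ha, hcc, mul_comm]
    ring
  refine ⟨({i : ι // cc i = 0}) ⊕ ({i : ι // 0 < cc i} × {i : ι // cc i < 0}), inferInstance,
    Sum.elim (fun i => a i.1) (fun p => cc p.1.1 • a p.2.1 - cc p.2.1 • a p.1.1), ?_⟩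
  ext w
  simp only [Set.mem_image, Set.mem_setOf_eq, Sum.forall, Sum.elim_inl, Sum.elim_inr]
  constructor
  · rintro ⟨⟨t, w'⟩, hmem, rfl⟩
    dsimp only
    constructor
    · rintro ⟨i, hi⟩
      have := hmem i
      rw [key] at this
      simpa [hi] using this
    · rintro ⟨⟨i, hi⟩, ⟨j, hj⟩⟩
      have h1 := hmem i
      have h2 := hmem j
      rw [key] at h1 h2
      simp only [AffineMap.coe_sub, AffineMap.coe_smul, Pi.sub_apply, Pi.smul_apply,
        smul_eq_mul]
      nlinarith [mul_nonneg (le_of_lt hi) h2, mul_nonneg (le_of_lt (neg_pos.mpr hj)) h1]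
  · rintro ⟨hz, hpair⟩
    -- choose t
    by_cases hL : Nonempty {i : ι // 0 < cc i}
    · obtain ⟨i₀, hi₀⟩ := Finite.exists_max (fun i : {i : ι // 0 < cc i} => (-(a i.1 w)) / cc i.1)
      refine ⟨((-(a i₀.1 w)) / cc i₀.1, w), ?_, rfl⟩
      intro i
      rw [key]
      rcases lt_trichotomy (cc i) 0 with hneg | h0 | hpos
      · -- upper bound: use pair constraint (i₀, i)
        have hp := hpair ⟨i₀, ⟨i, hneg⟩⟩
        simp only [AffineMap.coe_sub, AffineMap.coe_smul, Pi.sub_apply, Pi.smul_apply,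
          smul_eq_mul] at hp
        have hc0 : 0 < cc i₀.1 := i₀.2
        have hrw : a i w + -(a i₀.1 w) / cc i₀.1 * cc i
            = (cc i₀.1 * a i w - cc i * a i₀.1 w) / cc i₀.1 := by
          field_simp
          try ring
        rw [hrw]
        exact div_nonneg hp hc0.le
      · simpa [h0] using hz ⟨i, h0⟩
      · have := hi₀ ⟨i, hpos⟩
        have h2 : (-(a i w)) / cc i ≤ (-(a i₀.1 w)) / cc i₀.1 := this
        rw [div_le_div_iff₀ hpos i₀.2] at h2
        have hc0 : 0 < cc i₀.1 := i₀.2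
        have hrw : a i w + -(a i₀.1 w) / cc i₀.1 * cc i
            = (a i w * cc i₀.1 + -(a i₀.1 w) * cc i) / cc i₀.1 := by
          field_simp
          try ring
        rw [hrw]
        apply div_nonneg _ hc0.le
        nlinarith
    · -- no lower bounds
      by_cases hU : Nonempty {i : ι // cc i < 0}
      · obtain ⟨j₀, hj₀⟩ := Finite.exists_min (fun i : {i : ι // cc i < 0} => (a i.1 w) / (-(cc i.1)))
        refine ⟨((a j₀.1 w) / (-(cc j₀.1)), w), ?_, rfl⟩
        intro i
        rw [key]
        rcases lt_trichotomy (cc i) 0 with hneg | h0 | hpos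
        · have := hj₀ ⟨i, hneg⟩
          have hd : 0 < -(cc j₀.1) := neg_pos.mpr j₀.2
          rw [div_le_div_iff₀ hd (neg_pos.mpr hneg)] at this
          have hrw : a i w + a j₀.1 w / -(cc j₀.1) * cc i
              = (a i w * (-(cc j₀.1)) + a j₀.1 w * cc i) / (-(cc j₀.1)) := by
            field_simp
            have hne : cc j₀.1 ≠ 0 := ne_of_lt j₀.2
            field_simp
            ring
          rw [hrw]
          apply div_nonneg _ hd.le
          nlinarith
        · simpa [h0] using hz ⟨i, h0⟩
        · exact absurd ⟨⟨i, hpos⟩⟩ hL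
      · refine ⟨(0, w), ?_, rfl⟩
        intro i
        rw [key]
        rcases lt_trichotomy (cc i) 0 with hneg | h0 | hpos
        · exact absurd ⟨⟨i, hneg⟩⟩ hU
        · simpa [h0] using hz ⟨i, h0⟩
        · exact absurd ⟨⟨i, hpos⟩⟩ hL


/-- split off the first coordinate of a `Fin (k+1)`-tuple, as a linear equivalence. -/
noncomputable def finSuccLEquiv (k : ℕ) : (Fin (k + 1) → ℝ) ≃ₗ[ℝ] ℝ × (Fin k → ℝ) where
  toFun w := (w 0, fun i => w i.succ)
  invFun p := Fin.cons p.1 p.2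
  map_add' _ _ := rfl
  map_smul' _ _ := rfl
  left_inv w := by
    funext i
    refine Fin.cases ?_ (fun j => ?_) i
    · simp
    · simp
  right_inv p := by
    refine Prod.ext ?_ (funext fun i => ?_)
    · simp
    · simp

theorem fm_elim (k : ℕ) {X : Set ((Fin k → ℝ) × V)} (hX : IsHSet X) :
    IsHSet (Prod.snd '' X) := by
  induction k with
  | zero =>
    -- snd is an affine equivalence here
    let e : ((Fin 0 → ℝ) × V) ≃ₗ[ℝ] V :=
      LinearEquiv.ofLinear (LinearMap.snd ℝ _ V) (LinearMap.prod 0 LinearMap.id)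
        (by ext v; simp) (by
          apply LinearMap.ext
          rintro ⟨w, v⟩
          refine Prod.ext (funext fun i => i.elim0) rfl)
    have himg : Prod.snd '' X = (e.toAffineEquiv : _ ≃ᵃ[ℝ] V) '' X := rfl
    rw [himg]
    exact isHSet_image_equiv _ hX
  | succ k ih =>
    let e : ((Fin (k + 1) → ℝ) × V) ≃ₗ[ℝ] ℝ × ((Fin k → ℝ) × V) :=
      ((finSuccLEquiv k).prodCongr (LinearEquiv.refl ℝ V)).trans
        (LinearEquiv.prodAssoc ℝ ℝ (Fin k → ℝ) V)
    have h1 : IsHSet ((e.toAffineEquiv : _ ≃ᵃ[ℝ] (ℝ × ((Fin k → ℝ) × V))) '' X) :=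
      isHSet_image_equiv _ hX
    have h2 := ih (fm_core h1)
    have himg : Prod.snd '' (Prod.snd '' ((e.toAffineEquiv : _ ≃ᵃ[ℝ] _) '' X)) = Prod.snd '' X := by
      rw [Set.image_image, Set.image_image]
      apply congrArg (· '' X)
      funext p
      rfl
    rwa [himg] at h2


theorem isHSet_empty : IsHSet (∅ : Set V) := by
  refine ⟨Unit, inferInstance, fun _ => AffineMap.const ℝ V (-1), ?_⟩
  ext x
  simp

theorem isHSet_convexHull [FiniteDimensional ℝ V] (S : Finset V) :
    IsHSet (convexHull ℝ (S : Set V)) := by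
  classical
  rcases S.eq_empty_or_nonempty with rfl | hS
  · simpa using (isHSet_empty : IsHSet (∅ : Set V))
  set k := S.card with hk
  set a : Fin k → V := fun i => ((S.equivFin.symm i : S) : V) with ha
  set b := Module.finBasis ℝ V with hb
  -- the lifted simplex-graph set
  set L1 : Fin k → (((Fin k → ℝ) × V) →ₗ[ℝ] ℝ) :=
    fun i => (LinearMap.proj i).comp (LinearMap.fst ℝ (Fin k → ℝ) V) with hL1
  set Lsum : ((Fin k → ℝ) × V) →ₗ[ℝ] ℝ := ∑ i : Fin k, L1 i with hLsum
  set L3 : Fin (Module.finrank ℝ V) → (((Fin k → ℝ) × V) →ₗ[ℝ] ℝ) :=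
    fun bi => (b.coord bi).comp (LinearMap.snd ℝ (Fin k → ℝ) V)
      - ∑ i : Fin k, (b.coord bi (a i)) • L1 i with hL3
  set D : Set ((Fin k → ℝ) × V) :=
    (⋂ i : Fin k, {p | (0:ℝ) ≤ L1 i p}) ∩ ({p | Lsum p = 1} ∩ ⋂ bi, {p | L3 bi p = 0}) with hD
  have hDH : IsHSet D := by
    refine isHSet_inter (isHSet_iInter fun i => isHSet_setOf_linear_ge (L1 i) 0)
      (isHSet_inter (isHSet_setOf_linear_eq Lsum 1)
        (isHSet_iInter fun bi => isHSet_setOf_linear_eq (L3 bi) 0))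
  have hmem : ∀ p : (Fin k → ℝ) × V,
      p ∈ D ↔ (∀ i, 0 ≤ p.1 i) ∧ (∑ i, p.1 i) = 1 ∧ p.2 = ∑ i, p.1 i • a i := by
    rintro ⟨w, v⟩
    simp only [hD, Set.mem_inter_iff, Set.mem_iInter, Set.mem_setOf_eq, hL3,
      LinearMap.sub_apply, LinearMap.coe_comp, Function.comp_apply, LinearMap.snd_apply,
      LinearMap.sum_apply, LinearMap.smul_apply, hLsum, hL1, LinearMap.coe_proj,
      LinearMap.fst_apply, Function.eval, smul_eq_mul, sub_eq_zero]
    refine and_congr Iff.rfl (and_congr Iff.rfl ?_)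
    constructor
    · intro h
      apply b.ext_elem
      intro bi
      rw [← b.coord_apply, ← b.coord_apply, h bi, map_sum]
      refine Finset.sum_congr rfl fun i _ => ?_
      rw [map_smul, smul_eq_mul, mul_comm]
    · intro h bi
      rw [h, map_sum]
      refine Finset.sum_congr rfl fun i _ => ?_
      rw [map_smul, smul_eq_mul, mul_comm]
  have himg : Prod.snd '' D = convexHull ℝ (S : Set V) := by
    ext x
    constructor
    · rintro ⟨⟨w, v⟩, hp, rfl⟩
      rw [hmem] at hp
      obtain ⟨h0, h1, h2⟩ := hp
      exact mem_convexHull_of_exists_fintype w a h0 h1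
        (fun i => by simp [ha, Finset.coe_mem]) h2.symm
    · intro hx
      rw [mem_convexHull_iff_exists_fintype] at hx
      obtain ⟨ι', _, w, z, h0, h1, hzS, hsum⟩ := hx
      set idx : ι' → Fin k := fun j => S.equivFin ⟨z j, hzS j⟩ with hidx
      have haidx : ∀ j, a (idx j) = z j := by
        intro j
        simp [ha, hidx]
      set w' : Fin k → ℝ := fun i => ∑ j : ι', if idx j = i then w j else 0 with hw'
      refine ⟨(w', x), ?_, rfl⟩
      rw [hmem]
      refine ⟨fun i => Finset.sum_nonneg fun j _ => by split_ifs; exacts [h0 j, le_rfl], ?_, ?_⟩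
      · rw [hw']
        dsimp only
        rw [Finset.sum_comm]
        rw [← h1]
        refine Finset.sum_congr rfl fun j _ => ?_
        simp
      · rw [hw']
        dsimp only
        have : ∀ i : Fin k, (∑ j : ι', if idx j = i then w j else 0) • a i
            = ∑ j : ι', if idx j = i then w j • a i else 0 := by
          intro i
          rw [Finset.sum_smul]
          refine Finset.sum_congr rfl fun j _ => ?_
          split_ifs <;> simp
        rw [Finset.sum_congr rfl fun i _ => this i, Finset.sum_comm, ← hsum]
        refine Finset.sum_congr rfl fun j _ => ?_
        have : ∀ i, (if idx j = i then w j • a i else 0) = if idx j = i then w j • z j else 0 := by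
          intro i
          split_ifs with h
          · rw [← h, haidx]
          · rfl
        rw [Finset.sum_congr rfl fun i _ => this i]
        simp
  rw [← himg]
  exact fm_elim k hDH

end Dev

section Dev4
variable {V : Type*} [AddCommGroup V] [Module ℝ V]

/-- `f` is a polyhedral function with Euler integral `n`. -/
def EVal (I : PolF V →+ ℤ) (f : V → ℤ) (n : ℤ) : Prop :=
  ∃ h : f ∈ PolF V, I ⟨f, h⟩ = n

theorem eval_zero (I : PolF V →+ ℤ) : EVal I 0 0 := by
  refine ⟨(PolF V).zero_mem, ?_⟩
  have : (⟨(0 : V → ℤ), (PolF V).zero_mem⟩ : PolF V) = 0 := rfl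
  rw [this, map_zero]

theorem EVal.add {I : PolF V →+ ℤ} {f g : V → ℤ} {m n : ℤ}
    (hf : EVal I f m) (hg : EVal I g n) : EVal I (f + g) (m + n) := by
  obtain ⟨hf1, hf2⟩ := hf
  obtain ⟨hg1, hg2⟩ := hg
  refine ⟨(PolF V).add_mem hf1 hg1, ?_⟩
  have : (⟨f + g, (PolF V).add_mem hf1 hg1⟩ : PolF V) = ⟨f, hf1⟩ + ⟨g, hg1⟩ := rfl
  rw [this, map_add, hf2, hg2]

theorem eval_sum {I : PolF V →+ ℤ} {κ : Type*} (s : Finset κ) (F : κ → V → ℤ) (v : κ → ℤ)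
    (h : ∀ j ∈ s, EVal I (F j) (v j)) :
    EVal I (∑ j ∈ s, F j) (∑ j ∈ s, v j) := by
  classical
  induction s using Finset.induction_on with
  | empty => simpa using eval_zero I
  | @insert j s hj ih =>
    rw [Finset.sum_insert hj, Finset.sum_insert hj]
    exact (h j (Finset.mem_insert_self j s)).add
      (ih fun j' hj' => h j' (Finset.mem_insert_of_mem hj'))

theorem eval_cell {I : PolF V →+ ℤ} (hI : IsEulerHom I) {C : Set V}
    (hC : IsPolyhedralCell C) : EVal I (ind C) ((-1) ^ cellDim C) :=
  ⟨ind_mem_PolF hC, hI C hC⟩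

theorem EVal.congr {I : PolF V →+ ℤ} {f g : V → ℤ} {m n : ℤ}
    (hf : EVal I f m) (hfg : f = g) (hmn : m = n) : EVal I g n := hfg ▸ hmn ▸ hf

theorem isPolyhedralCell_of_families {ιE ιH : Type} [Finite ιE] [Finite ιH]
    (E : ιE → (V →ᵃ[ℝ] ℝ)) (H : ιH → (V →ᵃ[ℝ] ℝ))
    (hne : {x : V | (∀ i, E i x = 0) ∧ ∀ j, 0 < H j x}.Nonempty) :
    IsPolyhedralCell {x : V | (∀ i, E i x = 0) ∧ ∀ j, 0 < H j x} := by
  obtain ⟨p, ⟨eE⟩⟩ := Finite.exists_equiv_fin ιE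
  obtain ⟨q, ⟨eH⟩⟩ := Finite.exists_equiv_fin ιH
  refine ⟨hne, p, q, E ∘ eE.symm, H ∘ eH.symm, ?_⟩
  ext x
  simp only [Set.mem_setOf_eq, Function.comp_apply]
  constructor
  · rintro ⟨h1, h2⟩
    exact ⟨fun i => h1 _, fun j => h2 _⟩
  · rintro ⟨h1, h2⟩
    refine ⟨fun i => ?_, fun j => ?_⟩
    · simpa using h1 (eE i)
    · simpa using h2 (eH j)

theorem aff_apply_add_smul (f : V →ᵃ[ℝ] ℝ) (a u : V) (t : ℝ) :
    f (a + t • u) = f a + t * f.linear u := by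
  have h1 : a + t • u = (t • u) +ᵥ a := add_comm _ _
  rw [h1, AffineMap.map_vadd, map_smul]
  simp only [vadd_eq_add, smul_eq_mul]
  ring

theorem aff_linear_sub (f : V →ᵃ[ℝ] ℝ) (y c : V) : f.linear (y - c) = f y - f c := by
  have h1 : c + (1:ℝ) • (y - c) = y := by simp
  have := aff_apply_add_smul f c (y - c) 1
  rw [h1, one_mul] at this
  linarith

theorem aff_segment (f : V →ᵃ[ℝ] ℝ) (c y : V) (t : ℝ) :
    f (c + t • (y - c)) = f c + t * (f y - f c) := by
  rw [aff_apply_add_smul, aff_linear_sub]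

theorem isPolyhedralCell_singleton [FiniteDimensional ℝ V] (c : V) :
    IsPolyhedralCell ({c} : Set V) := by
  classical
  set b := Module.finBasis ℝ V with hb
  have hset : ({c} : Set V) = {x | (∀ i, ((b.coord i).toAffineMap.comp
      (AffineMap.id ℝ V - AffineMap.const ℝ V c)) x = 0) ∧
      ∀ j : Fin 0, 0 < (j.elim0 : V →ᵃ[ℝ] ℝ) x} := by
    ext x
    simp only [Set.mem_singleton_iff, Set.mem_setOf_eq, AffineMap.comp_apply,
      LinearMap.coe_toAffineMap, AffineMap.coe_sub, Pi.sub_apply, AffineMap.id_apply,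
      AffineMap.const_apply]
    constructor
    · rintro rfl
      exact ⟨fun i => by simp, fun j => j.elim0⟩
    · rintro ⟨h1, _⟩
      have : x - c = 0 := b.forall_coord_eq_zero_iff.mp h1
      have := sub_eq_zero.mp this
      exact this
  rw [hset]
  exact isPolyhedralCell_of_families _ _ (by rw [← hset]; exact ⟨c, rfl⟩)

theorem cellDim_singleton (c : V) : cellDim ({c} : Set V) = 0 := by
  unfold cellDim
  rw [direction_affineSpan, vectorSpan_singleton]
  exact finrank_bot ℝ V

/-- no ray is entirely contained in `K`. -/
def NoRay (K : Set V) : Prop := ∀ x u : V, u ≠ 0 → ∃ t : ℝ, 0 ≤ t ∧ x + t • u ∉ K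

theorem NoRay.mono {K L : Set V} (h : K ⊆ L) (hL : NoRay L) : NoRay K := fun x u hu =>
  (hL x u hu).imp fun t ht => ⟨ht.1, fun hin => ht.2 (h hin)⟩

theorem noRay_convexHull [FiniteDimensional ℝ V] (S : Finset V) :
    NoRay (convexHull ℝ (S : Set V)) := by
  classical
  intro x u hu
  set b := Module.finBasis ℝ V with hb
  have hex : ∃ i, b.coord i u ≠ 0 := by
    by_contra hcon
    push_neg at hcon
    exact hu (b.forall_coord_eq_zero_iff.mp hcon)
  obtain ⟨i, hi⟩ := hex
  set φ : V →ₗ[ℝ] ℝ := b.coord i with hφ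
  set ψ : V →ₗ[ℝ] ℝ := if 0 < φ u then φ else -φ with hψ
  have hψu : 0 < ψ u := by
    rw [hψ]
    split_ifs with h
    · exact h
    · simp only [LinearMap.neg_apply, neg_pos]
      rcases lt_trichotomy (φ u) 0 with h' | h' | h'
      · exact h'
      · exact absurd h' hi
      · exact absurd h' h
  rcases S.eq_empty_or_nonempty with rfl | hS
  · exact ⟨0, le_rfl, by simp⟩
  set M := S.sup' hS (fun s => ψ s) with hM
  have hbound : ∀ y ∈ convexHull ℝ (S : Set V), ψ y ≤ M := by
    intro y hy
    have hsub : (S : Set V) ⊆ {w | ψ w ≤ M} := fun s hs => Finset.le_sup' (fun s => ψ s) hs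
    have hconv : Convex ℝ {w : V | ψ w ≤ M} := convex_halfSpace_le ψ.isLinear M
    exact convexHull_min hsub hconv hy
  set t := max 0 ((M - ψ x) / ψ u + 1) with ht
  refine ⟨t, le_max_left _ _, fun hin => ?_⟩
  have h1 : ψ (x + t • u) ≤ M := hbound _ hin
  have h2 : ψ (x + t • u) = ψ x + t * ψ u := by
    rw [map_add, map_smul, smul_eq_mul]
  have h3 : (M - ψ x) / ψ u + 1 ≤ t := le_max_right _ _
  have h4 : ((M - ψ x) / ψ u) * ψ u = M - ψ x := div_mul_cancel₀ _ (ne_of_gt hψu)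
  nlinarith

theorem exists_relint_point {ι : Type} [Finite ι] (g : ι → (V →ᵃ[ℝ] ℝ))
    (hne : {x : V | ∀ i, 0 ≤ g i x}.Nonempty) :
    ∃ c, (∀ i, 0 ≤ g i c) ∧
      ∀ i, (∃ z, (∀ i', 0 ≤ g i' z) ∧ 0 < g i z) → 0 < g i c := by
  classical
  letI := Fintype.ofFinite ι
  suffices h : ∀ s : Finset ι, ∃ c, (∀ i, 0 ≤ g i c) ∧
      ∀ i ∈ s, (∃ z, (∀ i', 0 ≤ g i' z) ∧ 0 < g i z) → 0 < g i c by
    obtain ⟨c, h1, h2⟩ := h Finset.univ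
    exact ⟨c, h1, fun i hi => h2 i (Finset.mem_univ i) hi⟩
  intro s
  induction s using Finset.induction_on with
  | empty =>
    obtain ⟨c, hc⟩ := hne
    exact ⟨c, hc, by simp⟩
  | @insert j s hj ih =>
    obtain ⟨c₁, hc₁K, hc₁⟩ := ih
    by_cases hw : ∃ z, (∀ i', 0 ≤ g i' z) ∧ 0 < g j z
    · obtain ⟨z, hzK, hz⟩ := hw
      set c := c₁ + (2⁻¹ : ℝ) • (z - c₁) with hc
      have hval : ∀ i, g i c = g i c₁ + 2⁻¹ * (g i z - g i c₁) := fun i => aff_segment _ _ _ _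
      have hcK : ∀ i, 0 ≤ g i c := by
        intro i
        rw [hval i]
        have := hc₁K i
        have := hzK i
        nlinarith
      refine ⟨c, hcK, ?_⟩
      intro i hi hwit
      rcases Finset.mem_insert.mp hi with rfl | hi'
      · rw [hval i]
        have := hc₁K i
        nlinarith
      · have h1 : 0 < g i c₁ := hc₁ i hi' hwit
        rw [hval i]
        have := hzK i
        nlinarith
    · refine ⟨c₁, hc₁K, ?_⟩
      intro i hi hwit
      rcases Finset.mem_insert.mp hi with rfl | hi'
      · exact absurd hwit hw
      · exact hc₁ i hi' hwit

end Dev4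

section S9Main
variable {V : Type*} [AddCommGroup V] [Module ℝ V]
theorem dim_openJoin [FiniteDimensional ℝ V]
    (C : Set V) (c y₀ : V) (hy₀ : y₀ ∈ C) (g₀ : V →ᵃ[ℝ] ℝ)
    (hg₀C : ∀ y ∈ C, g₀ y = 0) (hg₀c : 0 < g₀ c)
    (A : Set V) (hA : A = {z | ∃ t : ℝ, (0 < t ∧ t < 1) ∧ ∃ y ∈ C, z = c + t • (y - c)}) :
    Module.finrank ℝ (affineSpan ℝ A).direction
      = Module.finrank ℝ (affineSpan ℝ C).direction + 1 := by
  classical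
  -- c is not in the affine span of C
  have hcspan : c ∉ affineSpan ℝ C := by
    intro hc
    set Z := AffineSubspace.comap g₀ (affineSpan ℝ ({0} : Set ℝ)) with hZ
    have hCZ : C ⊆ (Z : Set V) := by
      intro y hy
      show g₀ y ∈ affineSpan ℝ ({0} : Set ℝ)
      rw [hg₀C y hy]
      exact subset_affineSpan ℝ _ rfl
    have hle : affineSpan ℝ C ≤ Z := affineSpan_le.mpr hCZ
    have := hle hc
    have h0 : g₀ c ∈ (affineSpan ℝ ({0} : Set ℝ) : Set ℝ) := this
    rw [AffineSubspace.coe_affineSpan_singleton] at h0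
    simp only [Set.mem_singleton_iff] at h0
    exact absurd h0 (ne_of_gt hg₀c)
  have hy₀span : y₀ ∈ affineSpan ℝ C := subset_affineSpan ℝ C hy₀
  -- span A = span (insert c C)
  have hspan : affineSpan ℝ A = affineSpan ℝ (insert c C) := by
    apply le_antisymm
    · rw [affineSpan_le]
      rintro z hz
      rw [hA] at hz
      obtain ⟨t, ⟨ht0, ht1⟩, y, hy, rfl⟩ := hz
      have hcm : c ∈ affineSpan ℝ (insert c C) := subset_affineSpan ℝ _ (Set.mem_insert _ _)
      have hym : y ∈ affineSpan ℝ (insert c C) := subset_affineSpan ℝ _ (Set.mem_insert_of_mem _ hy)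
      have := AffineSubspace.smul_vsub_vadd_mem (affineSpan ℝ (insert c C)) t hym hcm hcm
      simpa [vsub_eq_sub, vadd_eq_add, add_comm] using this
    · rw [affineSpan_le, Set.insert_subset_iff]
      constructor
      · -- c ∈ span A
        have h1 : c + (3⁻¹ : ℝ) • (y₀ - c) ∈ A := by
          rw [hA]; exact ⟨3⁻¹, ⟨by norm_num, by norm_num⟩, y₀, hy₀, rfl⟩
        have h2 : c + (2/3 : ℝ) • (y₀ - c) ∈ A := by
          rw [hA]; exact ⟨2/3, ⟨by norm_num, by norm_num⟩, y₀, hy₀, rfl⟩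
        have hm1 := subset_affineSpan ℝ A h1
        have hm2 := subset_affineSpan ℝ A h2
        have := AffineSubspace.smul_vsub_vadd_mem (affineSpan ℝ A) (2:ℝ) hm1 hm2 hm2
        have heq : (2:ℝ) • ((c + (3⁻¹ : ℝ) • (y₀ - c)) -ᵥ (c + (2/3 : ℝ) • (y₀ - c)))
            +ᵥ (c + (2/3 : ℝ) • (y₀ - c)) = c := by
          simp only [vsub_eq_sub, vadd_eq_add]
          module
        rwa [heq] at this
      · -- C ⊆ span A
        intro z hz
        have h1 : c + (3⁻¹ : ℝ) • (z - c) ∈ A := by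
          rw [hA]; exact ⟨3⁻¹, ⟨by norm_num, by norm_num⟩, z, hz, rfl⟩
        have h2 : c + (2/3 : ℝ) • (z - c) ∈ A := by
          rw [hA]; exact ⟨2/3, ⟨by norm_num, by norm_num⟩, z, hz, rfl⟩
        have hm1 := subset_affineSpan ℝ A h1
        have hm2 := subset_affineSpan ℝ A h2
        have := AffineSubspace.smul_vsub_vadd_mem (affineSpan ℝ A) (2:ℝ) hm2 hm1 hm1
        have heq : (2:ℝ) • ((c + (2/3 : ℝ) • (z - c)) -ᵥ (c + (3⁻¹ : ℝ) • (z - c)))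
            +ᵥ (c + (3⁻¹ : ℝ) • (z - c)) = z := by
          simp only [vsub_eq_sub, vadd_eq_add]
          module
        rwa [heq] at this
  -- direction and dimension
  rw [hspan, ← affineSpan_insert_affineSpan,
    AffineSubspace.direction_affineSpan_insert hy₀span]
  have hvne : c -ᵥ y₀ ≠ 0 := by
    intro h
    rw [vsub_eq_sub, sub_eq_zero] at h
    exact hcspan (h ▸ hy₀span)
  have hvnotin : c -ᵥ y₀ ∉ (affineSpan ℝ C).direction := by
    intro hmem
    have := AffineSubspace.vadd_mem_of_mem_direction hmem hy₀span
    rw [vsub_vadd] at this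
    exact hcspan this
  have hinf : Submodule.span ℝ {c -ᵥ y₀} ⊓ (affineSpan ℝ C).direction = ⊥ := by
    rw [Submodule.eq_bot_iff]
    intro w hw
    rw [Submodule.mem_inf] at hw
    obtain ⟨hw1, hw2⟩ := hw
    rw [Submodule.mem_span_singleton] at hw1
    obtain ⟨r, rfl⟩ := hw1
    rcases eq_or_ne r 0 with rfl | hr
    · simp
    · exfalso
      apply hvnotin
      have := Submodule.smul_mem (affineSpan ℝ C).direction r⁻¹ hw2
      rwa [smul_smul, inv_mul_cancel₀ hr, one_smul] at this
  have := Submodule.finrank_sup_add_finrank_inf_eq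
    (Submodule.span ℝ {c -ᵥ y₀}) (affineSpan ℝ C).direction
  rw [hinf, finrank_bot, finrank_span_singleton hvne] at this
  omega



theorem eval_ind_coneJoin [FiniteDimensional ℝ V] {I : PolF V →+ ℤ} (hI : IsEulerHom I)
    {ιE ιH : Type} [Finite ιE] [Finite ιH]
    (E : ιE → (V →ᵃ[ℝ] ℝ)) (H : ιH → (V →ᵃ[ℝ] ℝ))
    {C : Set V} (hC : C = {x | (∀ i, E i x = 0) ∧ ∀ j, 0 < H j x}) (hCne : C.Nonempty)
    (c : V) (e₀ : ιE) (he₀ : 0 < E e₀ c) :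
    EVal I (ind {z | ∃ t : ℝ, (0 < t ∧ t ≤ 1) ∧ ∃ y ∈ C, z = c + t • (y - c)}) 0 := by
  classical
  set J : Set V := {z | ∃ t : ℝ, (0 < t ∧ t ≤ 1) ∧ ∃ y ∈ C, z = c + t • (y - c)} with hJ
  set g₀ : V →ᵃ[ℝ] ℝ := E e₀ with hg₀
  set κ : ℝ := g₀ c with hκdef
  have hκpos : 0 < κ := he₀
  have hκne : κ ≠ 0 := ne_of_gt hκpos
  set τ : V →ᵃ[ℝ] ℝ := AffineMap.const ℝ V 1 - κ⁻¹ • g₀ with hτ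
  have hτ_apply : ∀ z, τ z = 1 - κ⁻¹ * g₀ z := by
    intro z
    rw [hτ]
    simp [AffineMap.coe_sub, AffineMap.coe_smul, smul_eq_mul]
  set Fm : (V →ᵃ[ℝ] ℝ) → (V →ᵃ[ℝ] ℝ) := fun f =>
    (f c) • τ + (f.linear.toAffineMap - AffineMap.const ℝ V (f.linear c)) with hFm
  have hFm_apply : ∀ f z, Fm f z = f c * τ z + (f z - f c) := by
    intro f z
    have h1 : Fm f z = f c * τ z + (f.linear z - f.linear c) := by
      rw [hFm]
      simp [AffineMap.coe_add, AffineMap.coe_sub, AffineMap.coe_smul, smul_eq_mul]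
    rw [h1]
    have h2 : f.linear z - f.linear c = f z - f c := by
      rw [← map_sub, aff_linear_sub]
    rw [h2]
  -- membership facts for points of C
  have hCmem : ∀ y ∈ C, (∀ i, E i y = 0) ∧ ∀ j, 0 < H j y := by
    intro y hy
    rwa [hC] at hy
  have hg₀C : ∀ y ∈ C, g₀ y = 0 := fun y hy => (hCmem y hy).1 e₀
  -- value of τ and Fm on cone points
  have hτcone : ∀ (y : V) (t : ℝ), g₀ y = 0 → τ (c + t • (y - c)) = t := by
    intro y t hy
    have h1 : g₀ (c + t • (y - c)) = κ + t * (0 - κ) := by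
      rw [aff_segment, hy, ← hκdef]
    rw [hτ_apply, h1]
    field_simp
    ring
  have hFmcone : ∀ (f : V →ᵃ[ℝ] ℝ) (y : V) (t : ℝ), g₀ y = 0 →
      Fm f (c + t • (y - c)) = t * f y := by
    intro f y t hy
    rw [hFm_apply, hτcone y t hy, aff_segment]
    ring
  -- the open part of the cone
  set A : Set V := {z | (∀ i, Fm (E i) z = 0) ∧
      ∀ j : ιH ⊕ Fin 2, 0 < (Sum.elim (fun j' => Fm (H j')) ![τ, g₀] j) z} with hA
  -- cone points with t < 1 are in A
  have hJA : ∀ (t : ℝ) (y : V), 0 < t → t < 1 → y ∈ C → (c + t • (y - c)) ∈ A := by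
    intro t y ht0 ht1 hy
    obtain ⟨hyE, hyH⟩ := hCmem y hy
    have hy0 := hg₀C y hy
    constructor
    · intro i
      rw [hFmcone _ _ _ hy0, hyE i, mul_zero]
    · rintro (j | b)
      · simp only [Sum.elim_inl]
        rw [hFmcone _ _ _ hy0]
        exact mul_pos ht0 (hyH j)
      · match b with
        | 0 =>
          simp only [Sum.elim_inr, Matrix.cons_val_zero]
          rw [hτcone y t hy0]
          exact ht0
        | 1 =>
          simp only [Sum.elim_inr, Matrix.cons_val_one, Matrix.head_cons, Matrix.cons_val_zero]
          have : g₀ (c + t • (y - c)) = κ + t * (0 - κ) := by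
            rw [aff_segment, hy0, ← hκdef]
          rw [this]
          nlinarith
  -- A points are cone points with t < 1
  have hAJ : ∀ z ∈ A, ∃ t : ℝ, (0 < t ∧ t < 1) ∧ ∃ y ∈ C, z = c + t • (y - c) := by
    rintro z ⟨hzE, hzH⟩
    have hτz : 0 < τ z := by simpa using hzH (Sum.inr 0)
    have hg₀z : 0 < g₀ z := by
      have := hzH (Sum.inr 1)
      simpa [Matrix.cons_val_one, Matrix.head_cons] using this
    set t : ℝ := τ z with htdef
    have htne : t ≠ 0 := ne_of_gt hτz
    have ht1 : t < 1 := by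
      rw [htdef, hτ_apply]
      have : 0 < κ⁻¹ * g₀ z := mul_pos (inv_pos.mpr hκpos) hg₀z
      linarith
    set y : V := c + t⁻¹ • (z - c) with hy
    have hzy : z = c + t • (y - c) := by
      rw [hy]
      rw [add_sub_cancel_left]
      rw [smul_smul, mul_inv_cancel₀ htne, one_smul]
      abel
    have hyval : ∀ f : V →ᵃ[ℝ] ℝ, f y = f c + t⁻¹ * (f z - f c) := by
      intro f
      rw [hy, aff_segment]
    refine ⟨t, ⟨hτz, ht1⟩, y, ?_, hzy⟩
    rw [hC]
    constructor
    · intro i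
      have h1 := hzE i
      rw [hFm_apply, ← htdef] at h1
      rw [hyval (E i)]
      have : E i z - E i c = - (E i c * t) := by linarith
      rw [this]
      field_simp
      ring
    · intro j
      have h1 := hzH (Sum.inl j)
      simp only [Sum.elim_inl] at h1
      rw [hFm_apply, ← htdef] at h1
      rw [hyval (H j)]
      have hexp : H j c + t⁻¹ * (H j z - H j c) = t⁻¹ * (H j c * t + (H j z - H j c)) := by
        field_simp
        try ring
      rw [hexp]
      exact mul_pos (inv_pos.mpr hτz) h1
  -- C is contained in the cone J
  have hCJ : C ⊆ J := by
    intro y hy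
    rw [hJ]
    exact ⟨1, ⟨one_pos, le_refl 1⟩, y, hy, by simp⟩
  -- A is contained in J
  have hAJ' : A ⊆ J := by
    intro z hz
    obtain ⟨t, ⟨ht0, ht1⟩, y, hy, rfl⟩ := hAJ z hz
    exact ⟨t, ⟨ht0, le_of_lt ht1⟩, y, hy, rfl⟩
  -- J points are in A or C
  have hJAC : ∀ z ∈ J, z ∈ A ∨ z ∈ C := by
    rintro z ⟨t, ⟨ht0, ht1⟩, y, hy, rfl⟩
    rcases lt_or_eq_of_le ht1 with ht1' | rfl
    · exact Or.inl (hJA t y ht0 ht1' hy)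
    · right
      simpa using hy
  -- A and C are disjoint
  have hACdisj : ∀ z, z ∈ A → z ∈ C → False := by
    intro z hzA hzC
    have h1 : 0 < g₀ z := by
      have := hzA.2 (Sum.inr 1)
      simpa [Matrix.cons_val_one, Matrix.head_cons] using this
    have h2 : g₀ z = 0 := hg₀C z hzC
    rw [h2] at h1
    exact lt_irrefl 0 h1
  -- A is nonempty
  obtain ⟨y₀, hy₀⟩ := hCne
  have hAne : A.Nonempty := ⟨c + (2⁻¹ : ℝ) • (y₀ - c), hJA 2⁻¹ y₀ (by norm_num) (by norm_num) hy₀⟩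
  -- indicator identity
  have hind : ind J = ind C + ind A := by
    funext z
    simp only [ind, Pi.add_apply]
    by_cases hzC : z ∈ C
    · have hzJ : z ∈ J := hCJ hzC
      have hzA : z ∉ A := fun h => hACdisj z h hzC
      simp [hzJ, hzC, hzA]
    · by_cases hzA : z ∈ A
      · have hzJ : z ∈ J := hAJ' hzA
        simp [hzJ, hzC, hzA]
      · have hzJ : z ∉ J := fun h => (hJAC z h).elim hzA hzC
        simp [hzJ, hzC, hzA]
  -- cells
  have hCcell : IsPolyhedralCell C := by
    rw [hC]
    exact isPolyhedralCell_of_families E H (hC ▸ (⟨y₀, hy₀⟩ : Set.Nonempty C))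
  have hAcell : IsPolyhedralCell A := by
    rw [hA]
    exact isPolyhedralCell_of_families _ _ (hA ▸ hAne)
  -- dimension relation
  have hAset : A = {z | ∃ t : ℝ, (0 < t ∧ t < 1) ∧ ∃ y ∈ C, z = c + t • (y - c)} := by
    apply Set.eq_of_subset_of_subset
    · intro z hz
      exact hAJ z hz
    · rintro z ⟨t, ⟨ht0, ht1⟩, y, hy, rfl⟩
      exact hJA t y ht0 ht1 hy
  have hdim : cellDim A = cellDim C + 1 :=
    dim_openJoin C c y₀ hy₀ g₀ hg₀C hκpos A hAset
  -- conclude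
  have hvalC := eval_cell hI hCcell
  have hvalA := eval_cell hI hAcell
  have := hvalC.add hvalA
  refine this.congr hind.symm ?_
  rw [hdim, pow_succ]
  ring

end S9Main


theorem eval_ind_singleton {V : Type*} [AddCommGroup V] [Module ℝ V] [FiniteDimensional ℝ V]
    {I : PolF V →+ ℤ} (hI : IsEulerHom I) (c : V) : EVal I (ind {c}) 1 := by
  have h := eval_cell hI (isPolyhedralCell_singleton c)
  rwa [cellDim_singleton, pow_zero] at h

section SMain
variable {V : Type*} [AddCommGroup V] [Module ℝ V]

theorem eval_ind_of_isHSet [FiniteDimensional ℝ V] {I : PolF V →+ ℤ} (hI : IsEulerHom I)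
    {K : Set V} (hK : IsHSet K) (hne : K.Nonempty) (hnr : NoRay K) :
    EVal I (ind K) 1 := by
  classical
  obtain ⟨ι, hfin, g, hKdef⟩ := hK
  have hne' : {x : V | ∀ i, 0 ≤ g i x}.Nonempty := hKdef ▸ hne
  obtain ⟨c, hcK, hc⟩ := exists_relint_point g hne'
  have hmemK : ∀ z, z ∈ K ↔ ∀ i, 0 ≤ g i z := fun z => by rw [hKdef]; rfl
  have hcKmem : c ∈ K := (hmemK c).mpr hcK
  letI := Fintype.ofFinite ι
  set sgn : V → (ι → Bool) := fun z i => decide (0 < g i z) with hsgn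
  have hsgn_true : ∀ z i, sgn z i = true ↔ 0 < g i z := by intro z i; simp [hsgn]
  have hsgn_false : ∀ z i, sgn z i = false ↔ ¬ 0 < g i z := by intro z i; simp [hsgn]
  set Cell : (ι → Bool) → Set V := fun σ =>
    {x | (∀ i : {i // σ i = false}, g i.1 x = 0) ∧ ∀ i : {i // σ i = true}, 0 < g i.1 x}
    with hCell
  set sb : ι → Bool := sgn c with hsb
  -- any point of K lies in its sign cell
  have hF1 : ∀ z ∈ K, z ∈ Cell (sgn z) := by
    intro z hz
    rw [hmemK] at hz
    constructor
    · rintro ⟨i, hi⟩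
      rw [hsgn_false] at hi
      exact le_antisymm (not_lt.mp hi) (hz i)
    · rintro ⟨i, hi⟩
      exact (hsgn_true z i).mp hi
  -- cells are inside K
  have hF2 : ∀ σ, Cell σ ⊆ K := by
    intro σ z hz
    rw [hmemK]
    intro i
    cases hσi : σ i with
    | false => exact le_of_eq (hz.1 ⟨i, hσi⟩).symm
    | true => exact le_of_lt (hz.2 ⟨i, hσi⟩)
  -- sign vector is determined on a cell
  have hF3 : ∀ σ z, z ∈ Cell σ → sgn z = σ := by
    intro σ z hz
    funext i
    cases hσi : σ i with
    | false =>
      rw [hsgn_false]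
      rw [hz.1 ⟨i, hσi⟩]
      exact lt_irrefl 0
    | true =>
      rw [hsgn_true]
      exact hz.2 ⟨i, hσi⟩
  -- indices vanishing at c vanish on all of K
  have hF4 : ∀ i, sb i = false → ∀ z ∈ K, g i z = 0 := by
    intro i hi z hz
    rw [hsb, hsgn_false] at hi
    have hnw : ¬ (∃ z, (∀ i', 0 ≤ g i' z) ∧ 0 < g i z) := fun hw => hi (hc i hw)
    push_neg at hnw
    rw [hmemK] at hz
    exact le_antisymm (hnw z hz) (hz i)
  have hsbtrue : ∀ i, sb i = true ↔ 0 < g i c := fun i => hsgn_true c i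
  -- nonempty cells have sign vectors dominated by sb
  have hdom : ∀ σ, (Cell σ).Nonempty → ∀ i, σ i = true → sb i = true := by
    rintro σ ⟨y, hy⟩ i hi
    rw [hsbtrue]
    refine hc i ⟨y, ?_, hy.2 ⟨i, hi⟩⟩
    rw [← hmemK]
    exact hF2 σ hy
  set Bad : Finset (ι → Bool) := Finset.univ.filter (fun σ => (Cell σ).Nonempty ∧ σ ≠ sb)
    with hBad
  set Cone : (ι → Bool) → Set V := fun σ =>
    {z | ∃ t : ℝ, (0 < t ∧ t ≤ 1) ∧ ∃ y ∈ Cell σ, z = c + t • (y - c)} with hCone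
  -- cones are inside K
  have hP0 : ∀ σ, Cone σ ⊆ K := by
    rintro σ z ⟨t, ⟨ht0, ht1⟩, y, hy, rfl⟩
    have hyK := hF2 σ hy
    rw [hmemK] at hyK ⊢
    intro i
    rw [aff_segment]
    have := hcK i
    have := hyK i
    nlinarith
  -- c is in no cone over a bad cell
  have hP1 : ∀ σ ∈ Bad, c ∉ Cone σ := by
    rintro σ hσ ⟨t, ⟨ht0, ht1⟩, y, hy, hcy⟩
    have h0 : t • (y - c) = 0 := by
      have := hcy.symm
      rwa [add_eq_left] at this
    rcases smul_eq_zero.mp h0 with h | h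
    · exact (ne_of_gt ht0) h
    · have hyc : y = c := by rwa [sub_eq_zero] at h
      rw [hBad, Finset.mem_filter] at hσ
      exact hσ.2.2 ((hF3 σ c (hyc ▸ hy)).symm ▸ rfl)
  -- membership in cones is unique
  have hP2 : ∀ σ₁ ∈ Bad, ∀ σ₂ ∈ Bad, ∀ z, z ∈ Cone σ₁ → z ∈ Cone σ₂ → σ₁ = σ₂ := by
    have key : ∀ σ₁ ∈ Bad, ∀ σ₂ ∈ Bad, ∀ (t₁ t₂ : ℝ) (y₁ y₂ : V), 0 < t₁ → t₁ ≤ t₂ → t₂ ≤ 1 →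
        y₁ ∈ Cell σ₁ → y₂ ∈ Cell σ₂ → t₁ • (y₁ - c) = t₂ • (y₂ - c) → σ₁ = σ₂ := by
      intro σ₁ hσ₁ σ₂ hσ₂ t₁ t₂ y₁ y₂ ht₁0 ht₁₂ ht₂1 hy₁ hy₂ heq
      have ht₂0 : 0 < t₂ := lt_of_lt_of_le ht₁0 ht₁₂
      have hr0 : 0 < t₂⁻¹ * t₁ := mul_pos (inv_pos.mpr ht₂0) ht₁0
      have hr1 : t₂⁻¹ * t₁ ≤ 1 := by
        rw [← div_eq_inv_mul]
        exact div_le_one_of_le₀ ht₁₂ (le_of_lt ht₂0)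
      have hy₂sub : (t₂⁻¹ * t₁) • (y₁ - c) = y₂ - c := by
        rw [← smul_smul, heq, smul_smul, inv_mul_cancel₀ (ne_of_gt ht₂0), one_smul]
      have hy₂eq : y₂ = c + (t₂⁻¹ * t₁) • (y₁ - c) := by
        rw [hy₂sub]
        abel
      rcases lt_or_eq_of_le hr1 with hrlt | hreq
      · -- then y₂ would be in the relative interior cell: contradiction
        exfalso
        have hy₂sgn : sgn y₂ = sb := by
          funext i
          cases hsbi : sb i with
          | false =>
            rw [hsgn_false]
            rw [hF4 i hsbi y₂ (hF2 σ₂ hy₂)]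
            exact lt_irrefl 0
          | true =>
            rw [hsgn_true]
            have hgc : 0 < g i c := (hsbtrue i).mp hsbi
            have hgy₁ : 0 ≤ g i y₁ := by
              have := hF2 σ₁ hy₁
              rw [hmemK] at this
              exact this i
            rw [hy₂eq, aff_segment]
            nlinarith
        have := hF3 σ₂ y₂ hy₂
        rw [hy₂sgn] at this
        rw [hBad, Finset.mem_filter] at hσ₂
        exact hσ₂.2.2 this.symm
      · -- r = 1 : t₁ = t₂ and y₁ = y₂
        have ht : t₁ = t₂ := by
          field_simp at hreq
          linarith
        have hy : y₁ = y₂ := by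
          rw [ht] at heq
          have h2 : y₁ - c = y₂ - c := smul_right_injective V (ne_of_gt ht₂0) heq
          exact sub_left_inj.mp h2
        rw [← hF3 σ₁ y₁ hy₁, ← hF3 σ₂ y₂ hy₂, hy]
    rintro σ₁ hσ₁ σ₂ hσ₂ z ⟨t₁, ⟨ht₁0, ht₁1⟩, y₁, hy₁, hz₁⟩ ⟨t₂, ⟨ht₂0, ht₂1⟩, y₂, hy₂, hz₂⟩
    have heq : t₁ • (y₁ - c) = t₂ • (y₂ - c) := by
      have := hz₁.symm.trans hz₂
      exact add_left_cancel this
    rcases le_total t₁ t₂ with h | h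
    · exact key σ₁ hσ₁ σ₂ hσ₂ t₁ t₂ y₁ y₂ ht₁0 h ht₂1 hy₁ hy₂ heq
    · exact (key σ₂ hσ₂ σ₁ hσ₁ t₂ t₁ y₂ y₁ ht₂0 h ht₁1 hy₂ hy₁ heq.symm).symm
  -- every point of K other than c lies in a bad cone
  have hP3 : ∀ z ∈ K, z ≠ c → ∃ σ ∈ Bad, z ∈ Cone σ := by
    intro z hz hzc
    set u : V := z - c with hu
    have hune : u ≠ 0 := sub_ne_zero.mpr hzc
    set β : ι → ℝ := fun i => g i z - g i c with hβ
    have hray : ∀ i t, g i (c + t • u) = g i c + t * β i := by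
      intro i t
      rw [hu, aff_segment, hβ]
    have hNne : ∃ i, β i < 0 := by
      by_contra hcon
      push_neg at hcon
      obtain ⟨t₀, ht₀, hout⟩ := hnr c u hune
      apply hout
      rw [hmemK]
      intro i
      rw [hray]
      have := hcK i
      have := hcon i
      nlinarith
    have : Nonempty {i // β i < 0} := ⟨⟨hNne.choose, hNne.choose_spec⟩⟩
    obtain ⟨im, him⟩ := Finite.exists_min (fun i : {i // β i < 0} => g i.1 c / (-(β i.1)))
    set τ : ℝ := g im.1 c / (-(β im.1)) with hτ
    have hβim : 0 < -(β im.1) := neg_pos.mpr im.2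
    have hτ1 : 1 ≤ τ := by
      rw [hτ, le_div_iff₀ hβim]
      have hz' : 0 ≤ g im.1 z := by rw [hmemK] at hz; exact hz im.1
      have hβi : β im.1 = g im.1 z - g im.1 c := rfl
      rw [hβi]
      linarith
    have hτ0 : 0 < τ := lt_of_lt_of_le one_pos hτ1
    set e : V := c + τ • u with he
    have heK : e ∈ K := by
      rw [hmemK]
      intro i
      rw [he, hray]
      rcases le_or_gt 0 (β i) with hb | hb
      · have := hcK i
        nlinarith
      · have hmin := him ⟨i, hb⟩
        rw [hτ] at hmin ⊢
        have hβi : 0 < -(β i) := neg_pos.mpr hb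
        rw [div_le_div_iff₀ hβim hβi] at hmin
        have h4 : (g im.1 c / (-(β im.1))) * (-(β i)) ≤ g i c := by
          rw [div_mul_eq_mul_div, div_le_iff₀ hβim]
          nlinarith
        nlinarith
    have hgime : g im.1 e = 0 := by
      rw [he, hray, hτ]
      field_simp
      rw [div_self (ne_of_lt im.2)]
      ring
    have hgimc : 0 < g im.1 c := by
      rcases lt_or_eq_of_le (hcK im.1) with h | h
      · exact h
      · exfalso
        rw [hτ, ← h] at hτ1
        simp at hτ1
        linarith
    set σe : ι → Bool := sgn e with hσe
    have hσeBad : σe ∈ Bad := by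
      rw [hBad, Finset.mem_filter]
      refine ⟨Finset.mem_univ _, ⟨e, hF1 e heK⟩, ?_⟩
      intro hcon
      have h1 : σe im.1 = false := by
        rw [hσe, hsgn_false, hgime]
        exact lt_irrefl 0
      have h2 : sb im.1 = true := (hsbtrue im.1).mpr hgimc
      rw [hcon] at h1
      rw [h1] at h2
      exact Bool.false_ne_true h2
    refine ⟨σe, hσeBad, τ⁻¹, ⟨inv_pos.mpr hτ0, inv_le_one_of_one_le₀ hτ1⟩, e, hF1 e heK, ?_⟩
    rw [he]
    rw [add_sub_cancel_left, smul_smul, inv_mul_cancel₀ (ne_of_gt hτ0), one_smul, hu]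
    abel
  -- the partition identity
  have hpart : ind K = ind {c} + ∑ σ ∈ Bad, ind (Cone σ) := by
    funext z
    simp only [Pi.add_apply, Finset.sum_apply]
    by_cases hzK : z ∈ K
    · by_cases hzc : z = c
      · subst hzc
        have h1 : ind ({z} : Set V) z = 1 := by simp [ind]
        have h2 : ∀ σ ∈ Bad, ind (Cone σ) z = 0 := by
          intro σ hσ
          simp only [ind]
          rw [if_neg (hP1 σ hσ)]
        rw [Finset.sum_congr rfl h2]
        simp [ind, hzK]
      · obtain ⟨σ₀, hσ₀Bad, hσ₀⟩ := hP3 z hzK hzc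
        have h1 : ind ({c} : Set V) z = 0 := by simp [ind, hzc]
        have h2 : (∑ σ ∈ Bad, ind (Cone σ) z) = 1 := by
          rw [Finset.sum_eq_single_of_mem σ₀ hσ₀Bad]
          · simp [ind, hσ₀]
          · intro σ hσ hne'
            simp only [ind]
            rw [if_neg]
            intro hzσ
            exact hne' (hP2 σ hσ σ₀ hσ₀Bad z hzσ hσ₀)
        rw [h1, h2]
        simp [ind, hzK]
    · have h0 : ind K z = 0 := by simp [ind, hzK]
      have h1 : ind ({c} : Set V) z = 0 := by
        simp only [ind]
        rw [if_neg]
        intro h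
        rw [Set.mem_singleton_iff] at h
        exact hzK (h ▸ hcKmem)
      have h2 : ∀ σ ∈ Bad, ind (Cone σ) z = 0 := by
        intro σ hσ
        simp only [ind]
        rw [if_neg (fun h => hzK (hP0 σ h))]
      rw [h0, h1, Finset.sum_congr rfl h2]
      simp
  -- values
  have hvals : ∀ σ ∈ Bad, EVal I (ind (Cone σ)) 0 := by
    intro σ hσ
    rw [hBad, Finset.mem_filter] at hσ
    obtain ⟨-, hσne, hσnsb⟩ := hσ
    -- find an index where σ is false but sb is true
    have hex : ∃ i, σ i = false ∧ sb i = true := by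
      by_contra hcon
      push_neg at hcon
      apply hσnsb
      funext i
      cases hσi : σ i with
      | false =>
        cases hsbi : sb i with
        | false => rfl
        | true => exact absurd hsbi (hcon i hσi)
      | true => exact (hdom σ hσne i hσi).symm
    obtain ⟨i₀, hi₀f, hi₀t⟩ := hex
    have hgi₀ : 0 < g i₀ c := (hsbtrue i₀).mp hi₀t
    exact eval_ind_coneJoin hI (fun i : {i // σ i = false} => g i.1)
      (fun i : {i // σ i = true} => g i.1) rfl hσne c ⟨i₀, hi₀f⟩ hgi₀
  have hsum := eval_sum Bad (fun σ => ind (Cone σ)) (fun _ => 0) hvals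
  rw [Finset.sum_const_zero] at hsum
  have hfinal := (eval_ind_singleton hI c).add hsum
  exact hfinal.congr hpart.symm (by ring)



end SMain


open Pointwise Classical in
/-- Euler-characteristic convolution of indicator functions of compact
convex polytopes: `1_P ⋆ 1_Q = 1_{P+Q}`, i.e. for every `x`,
`I(y ↦ 1_P(y)·1_Q(x−y))` is `1` if `x ∈ P + Q` (Minkowski sum) and `0` otherwise. -/
theorem statement9 (V : Type*) [AddCommGroup V] [Module ℝ V] [FiniteDimensional ℝ V]
    (I : PolF V →+ ℤ) (hI : IsEulerHom I)
    (S T : Finset V) (hS : S.Nonempty) (hT : T.Nonempty)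
    (P Q : Set V) (hP : P = convexHull ℝ (S : Set V)) (hQ : Q = convexHull ℝ (T : Set V))
    (x : V) :
    ∃ hmem : (fun y => ind P y * ind Q (x - y)) ∈ PolF V,
      I ⟨fun y => ind P y * ind Q (x - y), hmem⟩ = if x ∈ P + Q then 1 else 0 := by
  classical
  set K : Set V := {y : V | y ∈ P ∧ x - y ∈ Q} with hKdef
  have hKH : IsHSet K := by
    have hP' : IsHSet P := hP ▸ isHSet_convexHull S
    have hQ' : IsHSet Q := hQ ▸ isHSet_convexHull T
    have hm : IsHSet ((AffineMap.const ℝ V x - AffineMap.id ℝ V) ⁻¹' Q) :=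
      isHSet_preimage _ hQ'
    have hKeq : K = P ∩ ((AffineMap.const ℝ V x - AffineMap.id ℝ V) ⁻¹' Q) := by
      ext y
      simp [hKdef, Set.mem_preimage, AffineMap.coe_sub, Pi.sub_apply]
    rw [hKeq]
    exact isHSet_inter hP' hm
  have hnr : NoRay K := by
    have hsub : K ⊆ P := fun y hy => hy.1
    exact NoRay.mono hsub (hP ▸ noRay_convexHull S)
  have hfun : (fun y => ind P y * ind Q (x - y)) = ind K := by
    funext y
    simp only [ind, hKdef, Set.mem_setOf_eq]
    by_cases h1 : y ∈ P <;> by_cases h2 : x - y ∈ Q <;> simp [h1, h2]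
  by_cases hx : x ∈ P + Q
  · have hne : K.Nonempty := by
      rw [Set.mem_add] at hx
      obtain ⟨p, hp, q, hq, hpq⟩ := hx
      refine ⟨p, hp, ?_⟩
      have : x - p = q := by rw [← hpq]; abel
      rwa [this]
    obtain ⟨hmem, hval⟩ := eval_ind_of_isHSet hI hKH hne hnr
    rw [hfun]
    exact ⟨hmem, by rw [hval, if_pos hx]⟩
  · have hfun0 : (fun y => ind P y * ind Q (x - y)) = (0 : V → ℤ) := by
      funext y
      simp only [ind, Pi.zero_apply]
      by_cases h1 : y ∈ P
      · have h2 : x - y ∉ Q := by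
          intro h2
          apply hx
          rw [Set.mem_add]
          exact ⟨y, h1, x - y, h2, by abel⟩
        simp [h1, h2]
      · simp [h1]
    rw [hfun0]
    refine ⟨(PolF V).zero_mem, ?_⟩
    have hz : (⟨(0 : V → ℤ), (PolF V).zero_mem⟩ : PolF V) = 0 := rfl
    rw [hz, map_zero, if_neg hx]
end

section
/- Let N be a finite-dimensional real inner product space, let σ and τ be closed convex cones in N, and let f ∈ τ. Then the infimum (taken in the extended reals) of the linear functional x ↦ ⟨f, x⟩ over the dual cone (σ ∩ τ)^∨ equals its infimum over the dual cone σ^∨. Concretely, both infima equal 0 if f ∈ σ, and both equal −∞ if f ∉ σ. -/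
open scoped RealInnerProductSpace

/-- Let `σ, τ` be closed convex cones in a finite-dimensional real
inner product space `N` and let `f ∈ τ`.  Then the infimum (in the extended reals) of
`x ↦ ⟪f, x⟫` over the dual cone `(σ ∩ τ)^∨` equals its infimum over `σ^∨`; concretely
both equal `0` if `f ∈ σ` and `−∞` if `f ∉ σ`. -/
theorem statement11 (N : Type*) [NormedAddCommGroup N] [InnerProductSpace ℝ N]
    [FiniteDimensional ℝ N]
    (σ τ : Set N)
    (hσconv : Convex ℝ σ) (hσsmul : ∀ c : ℝ, 0 ≤ c → ∀ x ∈ σ, c • x ∈ σ)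
    (hσ0 : (0 : N) ∈ σ) (hσcl : IsClosed σ)
    (hτconv : Convex ℝ τ) (hτsmul : ∀ c : ℝ, 0 ≤ c → ∀ x ∈ τ, c • x ∈ τ)
    (hτ0 : (0 : N) ∈ τ) (hτcl : IsClosed τ)
    (f : N) (hf : f ∈ τ) :
    (⨅ x ∈ {y : N | ∀ c ∈ σ ∩ τ, (0 : ℝ) ≤ inner ℝ c y}, ((inner ℝ f x : ℝ) : EReal)) =
        (⨅ x ∈ {y : N | ∀ c ∈ σ, (0 : ℝ) ≤ inner ℝ c y}, ((inner ℝ f x : ℝ) : EReal)) ∧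
      (f ∈ σ →
        (⨅ x ∈ {y : N | ∀ c ∈ σ ∩ τ, (0 : ℝ) ≤ inner ℝ c y}, ((inner ℝ f x : ℝ) : EReal)) = 0 ∧
        (⨅ x ∈ {y : N | ∀ c ∈ σ, (0 : ℝ) ≤ inner ℝ c y}, ((inner ℝ f x : ℝ) : EReal)) = 0) ∧
      (f ∉ σ →
        (⨅ x ∈ {y : N | ∀ c ∈ σ ∩ τ, (0 : ℝ) ≤ inner ℝ c y}, ((inner ℝ f x : ℝ) : EReal)) = ⊥ ∧
        (⨅ x ∈ {y : N | ∀ c ∈ σ, (0 : ℝ) ≤ inner ℝ c y}, ((inner ℝ f x : ℝ) : EReal)) = ⊥) := by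
  -- case f ∈ σ
  have hpos : f ∈ σ →
      (⨅ x ∈ {y : N | ∀ c ∈ σ ∩ τ, (0 : ℝ) ≤ inner ℝ c y}, ((inner ℝ f x : ℝ) : EReal)) = 0 ∧
      (⨅ x ∈ {y : N | ∀ c ∈ σ, (0 : ℝ) ≤ inner ℝ c y}, ((inner ℝ f x : ℝ) : EReal)) = 0 := by
    intro hfσ
    have h0mem1 : (0 : N) ∈ {y : N | ∀ c ∈ σ ∩ τ, (0 : ℝ) ≤ inner ℝ c y} := by
      intro c _; simp
    have h0mem2 : (0 : N) ∈ {y : N | ∀ c ∈ σ, (0 : ℝ) ≤ inner ℝ c y} := by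
      intro c _; simp
    constructor
    · apply le_antisymm
      · exact iInf₂_le_of_le 0 h0mem1 (by simp)
      · refine le_iInf₂ fun x hx => ?_
        exact_mod_cast hx f ⟨hfσ, hf⟩
    · apply le_antisymm
      · exact iInf₂_le_of_le 0 h0mem2 (by simp)
      · refine le_iInf₂ fun x hx => ?_
        exact_mod_cast hx f hfσ
  -- case f ∉ σ
  have hneg : f ∉ σ →
      (⨅ x ∈ {y : N | ∀ c ∈ σ ∩ τ, (0 : ℝ) ≤ inner ℝ c y}, ((inner ℝ f x : ℝ) : EReal)) = ⊥ ∧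
      (⨅ x ∈ {y : N | ∀ c ∈ σ, (0 : ℝ) ≤ inner ℝ c y}, ((inner ℝ f x : ℝ) : EReal)) = ⊥ := by
    intro hfσ
    -- build the convex cone
    set K : ConvexCone ℝ N :=
      { carrier := σ
        smul_mem' := fun c hc x hx => hσsmul c hc.le x hx
        add_mem' := fun x hx y hy => by
          have h := hσconv hx hy (by norm_num : (0:ℝ) ≤ 1/2) (by norm_num : (0:ℝ) ≤ 1/2)
            (by norm_num)
          have := hσsmul 2 (by norm_num) _ (h)
          simpa [smul_smul, smul_add] using this } with hK
    let P : ProperCone ℝ N :=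
      { carrier := σ
        add_mem' := fun {x y} hx hy => K.add_mem' hx hy
        zero_mem' := hσ0
        smul_mem' := fun c x hx => hσsmul c c.2 x hx
        isClosed' := hσcl }
    obtain ⟨x, hx, hxf⟩ := P.hyperplane_separation' hfσ
    rw [real_inner_comm] at hxf
    have hxσ : x ∈ {y : N | ∀ c ∈ σ, (0 : ℝ) ≤ inner ℝ c y} := fun c hc => hx c hc
    have hfx : (inner ℝ f x : ℝ) < 0 := by rwa [real_inner_comm]
    -- for each nonneg t, t • x is in both dual sets
    have hmem : ∀ t : ℝ, 0 ≤ t →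
        (t • x ∈ {y : N | ∀ c ∈ σ ∩ τ, (0 : ℝ) ≤ inner ℝ c y} ∧
         t • x ∈ {y : N | ∀ c ∈ σ, (0 : ℝ) ≤ inner ℝ c y}) := by
      intro t ht
      constructor
      · intro c hc
        rw [real_inner_smul_right]
        exact mul_nonneg ht (hxσ c hc.1)
      · intro c hc
        rw [real_inner_smul_right]
        exact mul_nonneg ht (hxσ c hc)
    have key : ∀ (S : Set N), (∀ t : ℝ, 0 ≤ t → t • x ∈ S) →
        (⨅ y ∈ S, ((inner ℝ f y : ℝ) : EReal)) = ⊥ := by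
      intro S hS
      rw [eq_bot_iff]
      refine le_of_forall_gt fun b hb => ?_
      induction b with
      | bot => simp at hb
      | coe r =>
        set t : ℝ := (|r| + 1) / (-(inner ℝ f x : ℝ)) with htdef
        have ht : 0 ≤ t := div_nonneg (by positivity) (by linarith)
        have hval : (inner ℝ f (t • x) : ℝ) = -(|r| + 1) := by
          rw [real_inner_smul_right, htdef]
          field_simp [hfx.ne]
        refine lt_of_le_of_lt (iInf₂_le_of_le (t • x) (hS t ht) le_rfl) ?_
        rw [hval]
        exact_mod_cast (by cases abs_cases r <;> linarith : -(|r|+1) < r)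
      | top =>
        exact lt_of_le_of_lt (iInf₂_le_of_le ((0:ℝ) • x) (hS 0 le_rfl) le_rfl)
          (EReal.coe_lt_top _)
    exact ⟨key _ fun t ht => (hmem t ht).1, key _ fun t ht => (hmem t ht).2⟩
  refine ⟨?_, hpos, hneg⟩
  by_cases hfσ : f ∈ σ
  · rw [(hpos hfσ).1, (hpos hfσ).2]
  · rw [(hneg hfσ).1, (hneg hfσ).2]
end

section
/- Let R be a commutative ring and let M = ⊕_{i∈ℤ} M_i be a ℤ-graded module over the polynomial ring R[z], where z is homogeneous of degree 1 (so z·M_i ⊆ M_{i+1}). Assume multiplication by z is injective on M. Then for every i ∈ ℤ, M_i ∩ (z−1)M = 0; equivalently, the composite M_i ↪ M → M/(z−1)M of the inclusion of the degree-i component with the quotient map to the fiber at 1 is injective. -/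
open Polynomial

variable (R M : Type*) [CommRing R] [AddCommGroup M] [Module R M]
  [Module (Polynomial R) M] [IsScalarTower R (Polynomial R) M]

/-- Multiplication by `z` (`= X`) on an `R[z]`-module, as an `R`-linear endomorphism. -/
noncomputable def zMul : M →ₗ[R] M where
  toFun m := (X : Polynomial R) • m
  map_add' a b := smul_add _ a b
  map_smul' r m := by simpa using smul_comm (X : Polynomial R) r m

/-- Multiplication by `z − 1` on an `R[z]`-module, as an `R`-linear endomorphism. -/
noncomputable def zSubOne : M →ₗ[R] M where
  toFun m := (X - 1 : Polynomial R) • m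
  map_add' a b := smul_add _ a b
  map_smul' r m := by simpa using smul_comm (X - 1 : Polynomial R) r m

/-- The `R`-submodule `(z − 1)·M ⊆ M`. -/
noncomputable def zSubOneRange : Submodule R M := LinearMap.range (zSubOne R M)

/-- The Klyachko filtration of the fiber `M/(z−1)M` of a `ℤ`-graded `R[z]`-module at `1`:
`F_{≤ i}` is the image of the degree-`i` component `ℳ i` under the quotient map. -/
noncomputable def klyachkoF (ℳ : ℤ → Submodule R M) (i : ℤ) :
    Submodule R (M ⧸ zSubOneRange R M) :=
  Submodule.map (zSubOneRange R M).mkQ (ℳ i)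

section Aux

variable {R M : Type*} [CommRing R] [AddCommGroup M] [Module R M]
  [Module (Polynomial R) M] [IsScalarTower R (Polynomial R) M]

set_option linter.unusedSectionVars false in
private lemma key_shift (ℳ : ℤ → Submodule R M) [DirectSum.Decomposition ℳ]
    (hdeg : ∀ i : ℤ, ∀ m ∈ ℳ i, (X : Polynomial R) • m ∈ ℳ (i + 1)) (n : M) (k : ℤ) :
    ((DirectSum.decompose ℳ ((X : Polynomial R) • n)) (k + 1) : M)
      = (X : Polynomial R) • ((DirectSum.decompose ℳ n) k : M) := by
  induction n using DirectSum.Decomposition.inductionOn ℳ with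
  | zero => simp
  | @homogeneous j w =>
    rcases eq_or_ne j k with rfl | hjk
    · rw [DirectSum.decompose_of_mem_same ℳ (hdeg j w w.2),
        DirectSum.decompose_of_mem_same ℳ w.2]
    · rw [DirectSum.decompose_of_mem_ne ℳ (hdeg j w w.2) (by omega),
        DirectSum.decompose_of_mem_ne ℳ w.2 hjk, smul_zero]
  | add a b ha hb =>
    rw [smul_add, DirectSum.decompose_add, DirectSum.decompose_add]
    simp only [DirectSum.add_apply, Submodule.coe_add]
    rw [ha, hb, smul_add]

private lemma xpow_inj (hinj : Function.Injective (zMul R M)) (s : ℕ) {v : M}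
    (h : ((X : Polynomial R) ^ s) • v = 0) : v = 0 := by
  induction s with
  | zero => simpa using h
  | succ s ih =>
    apply ih
    apply hinj
    have : (zMul R M) ((X : Polynomial R) ^ s • v) = (X : Polynomial R) • ((X : Polynomial R) ^ s • v) := rfl
    rw [this, smul_smul, ← pow_succ', h]
    simp [zMul]

private lemma core (ℳ : ℤ → Submodule R M) (hinternal : DirectSum.IsInternal ℳ)
    (hdeg : ∀ i : ℤ, ∀ m ∈ ℳ i, (X : Polynomial R) • m ∈ ℳ (i + 1))
    (hinj : Function.Injective (zMul R M)) (i : ℤ) {m : M} (hm : m ∈ ℳ i)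
    (hr : m ∈ zSubOneRange R M) : m = 0 := by
  classical
  haveI : DirectSum.Decomposition ℳ := hinternal.chooseDecomposition ℳ
  obtain ⟨n, hn⟩ := hr
  have hn' : (X : Polynomial R) • n = m + n := by
    have : (X - 1 : Polynomial R) • n = m := hn
    rw [← this, sub_smul, one_smul]; abel
  set f : ℤ → M := fun k => ((DirectSum.decompose ℳ n) k : M) with hf
  -- the componentwise equation
  have e : ∀ k : ℤ, ((DirectSum.decompose ℳ m) k : M) + f k = (X : Polynomial R) • f (k - 1) := by
    intro k
    have h1 := key_shift ℳ hdeg n (k - 1)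
    rw [(by omega : k - 1 + 1 = k), hn', DirectSum.decompose_add] at h1
    rw [← h1]
    simp [hf, DirectSum.add_apply]
  -- finite support
  have hfin : {k : ℤ | f k ≠ 0}.Finite := by
    apply Set.Finite.subset (DirectSum.decompose ℳ n).support.finite_toSet
    intro k hk
    simp only [Finset.coe_sort_coe, Finset.mem_coe, DFinsupp.mem_support_iff]
    intro h0
    exact hk (by simp [hf, h0])
  obtain ⟨b, hb⟩ := hfin.bddAbove
  obtain ⟨c, hc⟩ := hfin.bddBelow
  have hbig : ∀ k : ℤ, b < k → f k = 0 := by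
    intro k hk
    by_contra h
    exact absurd (hb h) (by omega)
  have hsmall : ∀ k : ℤ, k < c → f k = 0 := by
    intro k hk
    by_contra h
    exact absurd (hc h) (by omega)
  -- downward: f k = X^s • f (k - s) for k < i
  have down : ∀ s : ℕ, ∀ k : ℤ, k < i → f k = ((X : Polynomial R) ^ s) • f (k - s) := by
    intro s
    induction s with
    | zero => intro k _; simp
    | succ s ih =>
      intro k hk
      have h1 := ih k hk
      have h2 := e (k - s)
      rw [DirectSum.decompose_of_mem_ne ℳ hm (by omega : i ≠ k - (s : ℤ)), zero_add] at h2
      rw [h1, h2, smul_smul, ← pow_succ]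
      congr 2
      omega
  have down0 : ∀ k : ℤ, k < i → f k = 0 := by
    intro k hk
    obtain ⟨s, hs⟩ : ∃ s : ℕ, k - s < c := ⟨(k - c + 1).toNat, by omega⟩
    rw [down s k hk, hsmall _ hs, smul_zero]
  -- upward: f (i + 1 + t) = X^(t+1) • f i
  have up : ∀ t : ℕ, f (i + 1 + t) = ((X : Polynomial R) ^ (t + 1)) • f i := by
    intro t
    induction t with
    | zero =>
      have h2 := e (i + 1)
      rw [DirectSum.decompose_of_mem_ne ℳ hm (by omega : i ≠ i + 1), zero_add] at h2
      simpa using h2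
    | succ t ih =>
      have h2 := e (i + 1 + (t + 1 : ℕ))
      push_cast at h2 ⊢
      rw [DirectSum.decompose_of_mem_ne ℳ hm (by omega : i ≠ i + 1 + ((t : ℤ) + 1)), zero_add] at h2
      rw [h2, (by omega : i + 1 + ((t : ℤ) + 1) - 1 = i + 1 + (t : ℤ)), ih,
        smul_smul, ← pow_succ']
  have fi0 : f i = 0 := by
    obtain ⟨t, ht⟩ : ∃ t : ℕ, b < i + 1 + t := ⟨(b - i + 1).toNat, by omega⟩
    have := up t
    rw [hbig _ ht] at this
    exact xpow_inj hinj (t + 1) this.symm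
  have h2 := e i
  rw [DirectSum.decompose_of_mem_same ℳ hm, fi0, add_zero,
    down0 (i - 1) (by omega), smul_zero] at h2
  exact h2

end Aux

/-- Let `M = ⊕ᵢ Mᵢ` be a `ℤ`-graded module over `R[z]` (`z` of degree
`1`) on which multiplication by `z` is injective.  Then for every `i`,
`Mᵢ ∩ (z−1)M = 0`; equivalently, the composite `Mᵢ ↪ M → M/(z−1)M` is injective. -/
theorem statement14 (R M : Type*) [CommRing R] [AddCommGroup M] [Module R M]
    [Module (Polynomial R) M] [IsScalarTower R (Polynomial R) M]
    (ℳ : ℤ → Submodule R M) (hinternal : DirectSum.IsInternal ℳ)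
    (hdeg : ∀ i : ℤ, ∀ m ∈ ℳ i, (X : Polynomial R) • m ∈ ℳ (i + 1))
    (hinj : Function.Injective (zMul R M)) (i : ℤ) :
    ℳ i ⊓ zSubOneRange R M = ⊥ ∧
      Function.Injective ((zSubOneRange R M).mkQ.comp (ℳ i).subtype) := by
  constructor
  · rw [eq_bot_iff]
    rintro x ⟨hx1, hx2⟩
    exact core ℳ hinternal hdeg hinj i hx1 hx2
  · intro a b hab
    simp only [LinearMap.comp_apply, Submodule.subtype_apply] at hab
    rw [Submodule.mkQ_apply, Submodule.mkQ_apply, Submodule.Quotient.eq] at hab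
    have := core ℳ hinternal hdeg hinj i (sub_mem a.2 b.2) hab
    exact Subtype.ext (by rwa [sub_eq_zero] at this)
end

section
/- Let R be a commutative ring and let M = ⊕_{i∈ℤ} M_i be a ℤ-graded module over the polynomial ring R[z], where z is homogeneous of degree 1, and assume multiplication by z is injective on M. For each i let F_{≤i} ⊆ M/(z−1)M denote the image of M_i under the quotient map M → M/(z−1)M. Then F_{≤i−1} ⊆ F_{≤i} for all i, and the quotient map induces an isomorphism of R-modules M_i/(z·M_{i−1}) ≅ F_{≤i}/F_{≤i−1}. (That is, the i-th graded piece of the associated graded of the Klyachko filtration of the fiber at 1 is naturally isomorphic to the degree-i weight space of the fiber M/zM at 0.) -/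
open Polynomial

variable (R M : Type*) [CommRing R] [AddCommGroup M] [Module R M]
  [Module (Polynomial R) M] [IsScalarTower R (Polynomial R) M]

section Aux

variable {R M}

/-- Component of `X • u` in terms of components of `u`. -/
lemma decompose_X_smul (ℳ : ℤ → Submodule R M) [DirectSum.Decomposition ℳ]
    (hdeg : ∀ j : ℤ, ∀ m ∈ ℳ j, (X : Polynomial R) • m ∈ ℳ (j + 1))
    (u : M) (j : ℤ) :
    ((DirectSum.decompose ℳ ((X : Polynomial R) • u) j : M)) =
      (X : Polynomial R) • (DirectSum.decompose ℳ u (j - 1) : M) := by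
  induction u using DirectSum.Decomposition.inductionOn ℳ with
  | zero => simp
  | @homogeneous k m =>
    have hXm : (X : Polynomial R) • (m : M) ∈ ℳ (k + 1) := hdeg k m m.2
    by_cases hj : j = k + 1
    · subst hj
      rw [DirectSum.decompose_of_mem_same ℳ hXm,
        DirectSum.decompose_of_mem_same ℳ (show (m : M) ∈ ℳ (k + 1 - 1) by simpa using m.2)]
    · rw [DirectSum.decompose_of_mem_ne ℳ hXm (fun h => hj h.symm),
        DirectSum.decompose_of_mem_ne ℳ (show (m : M) ∈ ℳ k from m.2) (by omega), smul_zero]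
  | add a b ha hb =>
    rw [smul_add, DirectSum.decompose_add, DirectSum.decompose_add, DirectSum.add_apply,
      DirectSum.add_apply, Submodule.coe_add, Submodule.coe_add, ha, hb, smul_add]

/-- The key graded computation: if `x ∈ ℳ i`, `n ∈ ℳ (i-1)` and `x - n ∈ (z-1)M`, then
`x ∈ z • ℳ (i-1)`. -/
lemma key_graded (ℳ : ℤ → Submodule R M) [DirectSum.Decomposition ℳ]
    (hdeg : ∀ j : ℤ, ∀ m ∈ ℳ j, (X : Polynomial R) • m ∈ ℳ (j + 1))
    (hinj : Function.Injective (zMul R M)) (i : ℤ)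
    {x n u : M} (hx : x ∈ ℳ i) (hn : n ∈ ℳ (i - 1))
    (h : x - n = (X - 1 : Polynomial R) • u) :
    ∃ m ∈ ℳ (i - 1), (X : Polynomial R) • m = x := by
  classical
  set uc : ℤ → M := fun j => (DirectSum.decompose ℳ u j : M) with huc
  have hcomp : ∀ j : ℤ,
      (DirectSum.decompose ℳ (x - n) j : M) = (X : Polynomial R) • uc (j - 1) - uc j := by
    intro j
    rw [h, sub_smul, one_smul, DirectSum.decompose_sub, DirectSum.sub_apply]
    push_cast
    rw [decompose_X_smul ℳ hdeg u j]
  have hne : ∀ j : ℤ, j ≠ i → j ≠ i - 1 → (DirectSum.decompose ℳ (x - n) j : M) = 0 := by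
    intro j hj1 hj2
    rw [DirectSum.decompose_sub, DirectSum.sub_apply]
    push_cast
    rw [DirectSum.decompose_of_mem_ne ℳ hx (fun h => hj1 h.symm),
      DirectSum.decompose_of_mem_ne ℳ hn (fun h => hj2 h.symm), sub_zero]
  -- bounded support
  obtain ⟨N, hN⟩ := (DirectSum.decompose ℳ u).support.finite_toSet.bddAbove
  have hsup : ∀ j : ℤ, N < j → uc j = 0 := by
    intro j hj
    by_contra hne'
    have hmem : j ∈ (DirectSum.decompose ℳ u).support := by
      rw [DFinsupp.mem_support_iff]
      intro h0
      exact hne' (by rw [huc]; simp [h0])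
    exact absurd (hN (Finset.mem_coe.mpr hmem)) (not_le.mpr hj)
  -- downward induction
  have hzero : ∀ k : ℕ, ∀ j : ℤ, i ≤ j → uc (j + k) = 0 → uc j = 0 := by
    intro k
    induction k with
    | zero => intro j _ h0; simpa using h0
    | succ k ih =>
      intro j hij h0
      have h1 : uc (j + 1) = 0 := by
        refine ih (j + 1) (by omega) ?_
        have : (j + 1 : ℤ) + (k : ℕ) = j + ((k + 1 : ℕ) : ℤ) := by push_cast; ring
        rw [this]; exact h0
      have he : (X : Polynomial R) • uc j = 0 := by
        have h2 := hcomp (j + 1)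
        rw [hne (j + 1) (by omega) (by omega), h1] at h2
        rw [sub_zero] at h2
        simpa using h2.symm
      have := hinj (a₁ := uc j) (a₂ := 0) (by simpa [zMul] using he)
      exact this
  have hzi : ∀ j : ℤ, i ≤ j → uc j = 0 := by
    intro j hj
    exact hzero (N + 1 - j).toNat j hj (hsup _ (by omega))
  have hxeq : x = (X : Polynomial R) • uc (i - 1) := by
    have h1 := hcomp i
    have h2 : (DirectSum.decompose ℳ (x - n) i : M) = x := by
      rw [DirectSum.decompose_sub, DirectSum.sub_apply]
      push_cast
      rw [DirectSum.decompose_of_mem_same ℳ hx,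
        DirectSum.decompose_of_mem_ne ℳ hn (by omega), sub_zero]
    rw [h2, hzi i le_rfl, sub_zero] at h1
    exact h1
  exact ⟨uc (i - 1), (DirectSum.decompose ℳ u (i - 1)).2, hxeq.symm⟩

end Aux

/-- Let `M = ⊕ᵢ Mᵢ` be a `ℤ`-graded `R[z]`-module (`z` of degree `1`)
with multiplication by `z` injective, and let `F_{≤i} ⊆ M/(z−1)M` be the Klyachko
filtration (image of `Mᵢ`).  Then `F_{≤i−1} ⊆ F_{≤i}`, and the quotient map induces an
isomorphism `Mᵢ/(z·Mᵢ₋₁) ≅ F_{≤i}/F_{≤i−1}`: the natural map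
`Mᵢ → F_{≤i}/F_{≤i−1}` is surjective with kernel `z·Mᵢ₋₁`. -/
theorem statement15 (R M : Type*) [CommRing R] [AddCommGroup M] [Module R M]
    [Module (Polynomial R) M] [IsScalarTower R (Polynomial R) M]
    (ℳ : ℤ → Submodule R M) (hinternal : DirectSum.IsInternal ℳ)
    (hdeg : ∀ j : ℤ, ∀ m ∈ ℳ j, (X : Polynomial R) • m ∈ ℳ (j + 1))
    (hinj : Function.Injective (zMul R M)) (i : ℤ) :
    klyachkoF R M ℳ (i - 1) ≤ klyachkoF R M ℳ i ∧
      ∃ hcod : ∀ x : ℳ i, (zSubOneRange R M).mkQ (x : M) ∈ klyachkoF R M ℳ i,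
        Function.Surjective
          (((Submodule.comap (klyachkoF R M ℳ i).subtype
              (klyachkoF R M ℳ (i - 1))).mkQ).comp
            (LinearMap.codRestrict (klyachkoF R M ℳ i)
              ((zSubOneRange R M).mkQ.comp (ℳ i).subtype) hcod)) ∧
        LinearMap.ker
          (((Submodule.comap (klyachkoF R M ℳ i).subtype
              (klyachkoF R M ℳ (i - 1))).mkQ).comp
            (LinearMap.codRestrict (klyachkoF R M ℳ i)
              ((zSubOneRange R M).mkQ.comp (ℳ i).subtype) hcod)) =
          Submodule.comap (ℳ i).subtype (Submodule.map (zMul R M) (ℳ (i - 1))) := by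
  letI : DirectSum.Decomposition ℳ := hinternal.chooseDecomposition
  have mkQ_X_smul : ∀ m : M, (zSubOneRange R M).mkQ ((X : Polynomial R) • m)
      = (zSubOneRange R M).mkQ m := by
    intro m
    rw [Submodule.mkQ_apply, Submodule.mkQ_apply, Submodule.Quotient.eq]
    exact ⟨m, by simp [zSubOne, sub_smul]⟩
  have hle : klyachkoF R M ℳ (i - 1) ≤ klyachkoF R M ℳ i := by
    rintro y ⟨m, hm, rfl⟩
    refine ⟨(X : Polynomial R) • m, ?_, (mkQ_X_smul m)⟩
    simpa using hdeg (i - 1) m hm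
  refine ⟨hle, fun x => ⟨(x : M), x.2, rfl⟩, ?_, ?_⟩
  · -- surjectivity
    intro q
    obtain ⟨y, rfl⟩ := Submodule.mkQ_surjective _ q
    obtain ⟨m, hm, hmy⟩ := y.2
    refine ⟨⟨m, hm⟩, ?_⟩
    rw [LinearMap.comp_apply]
    congr 1
    exact Subtype.ext hmy
  · -- kernel
    ext x
    simp only [LinearMap.mem_ker, LinearMap.comp_apply, Submodule.mkQ_apply,
      Submodule.Quotient.mk_eq_zero, Submodule.mem_comap, Submodule.mem_map]
    constructor
    · intro hx
      have hx' : (zSubOneRange R M).mkQ (x : M) ∈ klyachkoF R M ℳ (i - 1) := hx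
      obtain ⟨n, hn, hnx⟩ := hx'
      have : (x : M) - n ∈ zSubOneRange R M := by
        rw [← Submodule.Quotient.eq]
        exact hnx.symm
      obtain ⟨u, hu⟩ := this
      obtain ⟨m, hm, hmx⟩ := key_graded ℳ hdeg hinj i x.2 hn
        (by rw [← hu]; rfl)
      exact ⟨m, hm, by simpa [zMul] using hmx⟩
    · rintro ⟨m, hm, hmx⟩
      have hmx' : (X : Polynomial R) • m = (x : M) := by simpa [zMul] using hmx
      show (zSubOneRange R M).mkQ (x : M) ∈ klyachkoF R M ℳ (i - 1)
      exact ⟨m, hm, by rw [← hmx', ← mkQ_X_smul m, hmx']⟩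
end

section
/- Let k be a field, let E be a finite-dimensional k-vector space, and let (F_{≤i})_{i∈ℤ} be an increasing family of subspaces of E (F_{≤i} ⊆ F_{≤i+1}) with F_{≤i} = 0 for all sufficiently small i and F_{≤i} = E for all sufficiently large i. Then there exists a ℤ-graded module M = ⊕_{i∈ℤ} M_i over the polynomial ring k[z] (z homogeneous of degree 1), which is finitely generated and free as a k[z]-module, together with a k-linear isomorphism φ : M/(z−1)M ≅ E such that φ carries the image of M_i in M/(z−1)M onto F_{≤i} for every i ∈ ℤ. (This is the essential surjectivity in the equivalence between 𝔾_m-equivariant vector bundles on 𝔸¹ and finite-dimensional vector spaces with increasing exhaustive bounded filtrations.) -/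
open Polynomial

variable (R M : Type*) [CommRing R] [AddCommGroup M] [Module R M]
  [Module (Polynomial R) M] [IsScalarTower R (Polynomial R) M]

section ReesAux

open DirectSum

variable {k : Type} [Field k] {E : Type} [AddCommGroup E] [Module k E]
variable (F : ℤ → Submodule k E)

/-- The Rees module of a filtration. -/
abbrev Rees := ⨁ i : ℤ, (F i)

noncomputable def el (i : ℤ) (x : E) (hx : x ∈ F i) : Rees F :=
  DirectSum.lof k ℤ (fun j => F j) i ⟨x, hx⟩

lemma el_congr {i i' : ℤ} (h : i = i') (x : E) (hx : x ∈ F i) (hx' : x ∈ F i') :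
    el F i x hx = el F i' x hx' := by subst h; rfl

lemma el_congr' {i i' : ℤ} (h : i = i') {x y : E} (hxy : x = y) (hx : x ∈ F i)
    (hy : y ∈ F i') : el F i x hx = el F i' y hy := by subst h; subst hxy; rfl

lemma el_add (i : ℤ) (x y : E) (hx : x ∈ F i) (hy : y ∈ F i) :
    el F i (x + y) (add_mem hx hy) = el F i x hx + el F i y hy := by
  unfold el
  rw [← map_add]
  rfl

lemma el_zero (i : ℤ) (h : (0:E) ∈ F i) : el F i 0 h = 0 := by
  unfold el
  have : (⟨0, h⟩ : F i) = 0 := rfl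
  rw [this, map_zero]

variable (hmono : ∀ i : ℤ, F i ≤ F (i + 1))

lemma Fmono (hmono : ∀ i : ℤ, F i ≤ F (i + 1)) : Monotone F :=
  monotone_int_of_le_succ hmono

/-- The shift endomorphism of the Rees module (multiplication by `z`). -/
noncomputable def SS : Rees F →ₗ[k] Rees F :=
  DirectSum.toModule k ℤ _ fun i =>
    (DirectSum.lof k ℤ (fun j => F j) (i + 1)) ∘ₗ Submodule.inclusion (hmono i)

lemma SS_el (i : ℤ) (x : E) (hx : x ∈ F i) :
    SS F hmono (el F i x hx) = el F (i + 1) x (hmono i hx) := by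
  unfold el SS
  rw [DirectSum.toModule_lof]
  rfl

lemma SS_pow_el (d : ℕ) (i : ℤ) (x : E) (hx : x ∈ F i) (hx' : x ∈ F (i + d)) :
    ((SS F hmono) ^ d) (el F i x hx) = el F (i + d) x hx' := by
  induction d with
  | zero => rw [pow_zero]; exact el_congr F (by push_cast; ring) x hx hx'
  | succ n ih =>
    have hn : x ∈ F (i + n) := Fmono F hmono (by omega) hx
    rw [pow_succ', Module.End.mul_eq_comp, LinearMap.comp_apply, ih hn, SS_el]
    exact el_congr F (by push_cast; ring) x _ hx'

/-- Evaluation at `1`. -/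
noncomputable def ev : Rees F →ₗ[k] E :=
  DirectSum.toModule k ℤ E fun i => (F i).subtype

lemma ev_el (i : ℤ) (x : E) (hx : x ∈ F i) : ev F (el F i x hx) = x := by
  unfold ev el; rw [DirectSum.toModule_lof]; rfl

lemma ev_SS : (ev F) ∘ₗ (SS F hmono) = ev F := by
  apply DirectSum.linearMap_ext
  intro i
  ext x
  show ev F (SS F hmono (el F i x.1 x.2)) = ev F (el F i x.1 x.2)
  rw [SS_el, ev_el, ev_el]

/-- Evaluation of the `i`-th component in `E`. -/
noncomputable def cpt (i : ℤ) : Rees F →ₗ[k] E :=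
  (F i).subtype ∘ₗ DirectSum.component k ℤ (fun j => F j) i

lemma cpt_el (i j : ℤ) (x : E) (hx : x ∈ F j) :
    cpt F i (el F j x hx) = if j = i then x else 0 := by
  rcases eq_or_ne j i with h | h
  · subst h; simp [cpt, el]
  · simp only [cpt, el, LinearMap.comp_apply, DirectSum.component.of, dif_neg h, if_neg h]
    rfl

lemma cpt_SS (i : ℤ) : (cpt F i) ∘ₗ (SS F hmono) = cpt F (i - 1) := by
  apply DirectSum.linearMap_ext
  intro j
  ext x
  show cpt F i (SS F hmono (el F j x.1 x.2)) = cpt F (i-1) (el F j x.1 x.2)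
  rw [SS_el, cpt_el, cpt_el]
  by_cases h : j = i - 1
  · rw [if_pos h, if_pos (by omega)]
  · rw [if_neg h, if_neg (by omega)]

lemma cpt_SS_pow (d : ℕ) (i : ℤ) :
    (cpt F i) ∘ₗ ((SS F hmono) ^ d : Rees F →ₗ[k] Rees F) = cpt F (i - d) := by
  induction d generalizing i with
  | zero => simp only [pow_zero, Nat.cast_zero, sub_zero, Module.End.one_eq_id, LinearMap.comp_id]
  | succ n ih =>
    rw [pow_succ', Module.End.mul_eq_comp, ← LinearMap.comp_assoc, cpt_SS, ih]
    congr 1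
    push_cast
    ring

lemma cpt_apply (i : ℤ) (m : Rees F) : cpt F i m = ((m i : F i) : E) := rfl

/-- Torsion-freeness of the Rees module. -/
lemma torsionfree (p : Polynomial k) (m : Rees F) (hp : p ≠ 0) (hm : m ≠ 0) :
    aeval (SS F hmono) p m ≠ 0 := by
  classical
  have hne : (DFinsupp.support m).Nonempty := by
    rw [Finset.nonempty_iff_ne_empty, Ne, DFinsupp.support_eq_empty]
    exact hm
  set i0 : ℤ := (DFinsupp.support m).min' hne with hi0
  have hmi0 : m i0 ≠ 0 := by
    have := (DFinsupp.support m).min'_mem hne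
    rwa [DFinsupp.mem_support_iff] at this
  have hlt : ∀ j < i0, m j = 0 := by
    intro j hj
    by_contra hc
    exact absurd (Finset.min'_le _ j (DFinsupp.mem_support_iff.mpr hc)) (by omega)
  set j0 := p.natTrailingDegree with hj0
  intro h0
  have key : cpt F (i0 + j0) (aeval (SS F hmono) p m) = p.coeff j0 • ((m i0 : F i0) : E) := by
    rw [aeval_eq_sum_range]
    simp only [LinearMap.coe_sum, Finset.sum_apply, LinearMap.smul_apply, map_sum, map_smul]
    rw [Finset.sum_eq_single j0]
    · rw [← LinearMap.comp_apply, cpt_SS_pow]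
      have hidx : i0 + (j0:ℤ) - (j0:ℤ) = i0 := by ring
      rw [hidx, cpt_apply]
    · intro b _ hb
      rcases lt_or_gt_of_ne hb with hlt' | hgt
      · rw [coeff_eq_zero_of_lt_natTrailingDegree hlt', zero_smul]
      · rw [← LinearMap.comp_apply, cpt_SS_pow, cpt_apply, hlt _ (by omega),
          ZeroMemClass.coe_zero, smul_zero]
    · intro hj0'
      exact absurd (Finset.mem_range.mpr (Nat.lt_succ_of_le p.natTrailingDegree_le_natDegree)) hj0'
  rw [h0, map_zero] at key
  have hc : p.coeff j0 ≠ 0 := trailingCoeff_nonzero_iff_nonzero.mpr hp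
  have hx : ((m i0 : F i0) : E) ≠ 0 := fun h => hmi0 (Subtype.ext h)
  exact (smul_ne_zero hc hx) key.symm

/-- The grading of the Rees module. -/
noncomputable def MM (i : ℤ) : Submodule k (Rees F) :=
  LinearMap.range (DirectSum.lof k ℤ (fun j => F j) i)

lemma isInternal_MM : DirectSum.IsInternal (MM F) := by
  rw [DirectSum.isInternal_submodule_iff_iSupIndep_and_iSup_eq_top]
  constructor
  · rw [iSupIndep_def]
    intro i
    rw [disjoint_iff_inf_le]
    rintro m ⟨⟨x, rfl⟩, hm2⟩
    have hker : (⨆ (j) (_ : j ≠ i), MM F j)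
        ≤ LinearMap.ker (DirectSum.component k ℤ (fun j => F j) i) := by
      refine iSup_le fun j => iSup_le fun hj => ?_
      rintro m ⟨y, rfl⟩
      simp only [LinearMap.mem_ker, DirectSum.component.of, dif_neg hj]
    have := hker hm2
    rw [LinearMap.mem_ker, DirectSum.component.lof_self] at this
    rw [this, map_zero]
    exact Submodule.zero_mem _
  · rw [eq_top_iff]
    intro m _
    induction m using DirectSum.induction_on with
    | zero => exact Submodule.zero_mem _
    | of i x =>
      exact Submodule.mem_iSup_of_mem i ⟨x, by rw [DirectSum.lof_eq_of]⟩
    | add x y hx hy => exact Submodule.add_mem _ (hx trivial) (hy trivial)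

lemma tele (d : ℕ) (j : ℤ) (x : E) (hx : x ∈ F j) (hx' : x ∈ F (j + d)) :
    ∃ u : Rees F, el F (j + d) x hx' - el F j x hx = SS F hmono u - u := by
  induction d with
  | zero =>
    exact ⟨0, by rw [el_congr F (by push_cast; ring) x hx' hx, sub_self, map_zero, sub_self]⟩
  | succ n ih =>
    have hn : x ∈ F (j + n) := Fmono F hmono (by omega) hx
    obtain ⟨u, hu⟩ := ih hn
    refine ⟨el F (j + n) x hn + u, ?_⟩
    rw [map_add]
    have h1 : el F (j + (n + 1 : ℕ)) x hx' = SS F hmono (el F (j + n) x hn) := by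
      rw [SS_el]
      exact el_congr F (by push_cast; ring) x hx' _
    rw [h1]
    have h2 : el F j x hx = el F (j + n) x hn - (SS F hmono u - u) := by
      rw [← hu]; abel
    rw [h2]
    abel

lemma tele' (i j : ℤ) (x : E) (hx : x ∈ F i) (hx' : x ∈ F j) :
    ∃ u : Rees F, el F i x hx = SS F hmono u - u + el F j x hx' := by
  rcases le_total i j with h | h
  · obtain ⟨u, hu⟩ := tele F hmono (j - i).toNat i x hx
      (by rw [show i + ((j - i).toNat : ℤ) = j by omega]; exact hx')
    rw [el_congr F (show i + ((j - i).toNat : ℤ) = j by omega) x _ hx'] at hu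
    refine ⟨-u, ?_⟩
    rw [map_neg]
    have : el F i x hx = el F j x hx' - (SS F hmono u - u) := by rw [← hu]; abel
    rw [this]; abel
  · obtain ⟨u, hu⟩ := tele F hmono (i - j).toNat j x hx'
      (by rw [show j + ((i - j).toNat : ℤ) = i by omega]; exact hx)
    rw [el_congr F (show j + ((i - j).toNat : ℤ) = i by omega) x _ hx] at hu
    exact ⟨u, by rw [← hu]; abel⟩

lemma decomp (n1 : ℤ) (htop : F n1 = ⊤) (m : Rees F) :
    ∃ u : Rees F, m = SS F hmono u - u
      + el F n1 (ev F m) (htop ▸ Submodule.mem_top) := by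
  induction m using DirectSum.induction_on with
  | zero =>
    refine ⟨0, ?_⟩
    simp only [map_zero, sub_zero, zero_add]
    rw [el_zero]
  | of i x =>
    have hx : DirectSum.of (fun j => (F j : Type)) i x = el F i x.1 x.2 := by
      rw [el, ← DirectSum.lof_eq_of k]
    rw [hx, ev_el]
    exact tele' F hmono i n1 x.1 x.2 _
  | add m m' hm hm' =>
    obtain ⟨u, hu⟩ := hm
    obtain ⟨u', hu'⟩ := hm'
    refine ⟨u + u', ?_⟩
    have : el F n1 (ev F (m + m')) (htop ▸ Submodule.mem_top)
        = el F n1 (ev F m) (htop ▸ Submodule.mem_top)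
          + el F n1 (ev F m') (htop ▸ Submodule.mem_top) := by
      rw [← el_add F n1 _ _ (htop ▸ Submodule.mem_top) (htop ▸ Submodule.mem_top)]
      exact el_congr' F rfl (map_add (ev F) m m') _ _
    rw [this, map_add]
    conv_lhs => rw [hu, hu']
    abel

end ReesAux

/-- Every finite-dimensional vector space `E` over a field `k` with an
increasing, exhaustive, bounded `ℤ`-indexed filtration `(F_{≤i})` arises as the fiber at
`1`, with its Klyachko filtration, of a `ℤ`-graded `k[z]`-module that is finitely
generated and free over `k[z]` (i.e. of a `𝔾ₘ`-equivariant vector bundle on `𝔸¹`). -/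
theorem statement16 (k : Type) [Field k] (E : Type) [AddCommGroup E] [Module k E]
    [FiniteDimensional k E]
    (F : ℤ → Submodule k E)
    (hmono : ∀ i : ℤ, F i ≤ F (i + 1))
    (hbot : ∃ n : ℤ, ∀ i ≤ n, F i = ⊥)
    (htop : ∃ n : ℤ, ∀ i : ℤ, n ≤ i → F i = ⊤) :
    ∃ (M : Type) (_ : AddCommGroup M) (_ : Module k M) (_ : Module (Polynomial k) M)
      (_ : IsScalarTower k (Polynomial k) M) (ℳ : ℤ → Submodule k M),
      DirectSum.IsInternal ℳ ∧
      (∀ i : ℤ, ∀ m ∈ ℳ i, (X : Polynomial k) • m ∈ ℳ (i + 1)) ∧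
      Module.Finite (Polynomial k) M ∧ Module.Free (Polynomial k) M ∧
      ∃ φ : (M ⧸ zSubOneRange k M) ≃ₗ[k] E,
        ∀ i : ℤ, Submodule.map φ.toLinearMap (klyachkoF k M ℳ i) = F i := by
  classical
  obtain ⟨n0', hbot'⟩ := hbot
  obtain ⟨n1, htop⟩ := htop
  have htop1 : F n1 = ⊤ := htop n1 le_rfl
  set n0 : ℤ := min n0' n1 with hn0
  have hn01 : n0 ≤ n1 := min_le_right _ _
  have hbot : ∀ i ≤ n0, F i = ⊥ := fun i hi => hbot' i (le_trans hi (min_le_left _ _))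
  set A := Module.AEval' (SS F hmono) with hA
  letI : AddCommGroup A := inferInstanceAs (AddCommGroup (Rees F))
  have hfin : Module.Finite (Polynomial k) A := by
    have hfg : ∀ i : ℤ, ∃ s : Finset (Rees F), Submodule.span k (s : Set (Rees F)) = MM F i := by
      intro i
      have : Module.Finite k (MM F i) := Module.Finite.range _
      obtain ⟨s, hs⟩ := (Module.Finite.iff_fg (N := MM F i)).mp this
      exact ⟨s, hs⟩
    choose s hs using hfg
    set T : Finset (Rees F) := (Finset.Icc n0 n1).biUnion s with hT
    set TA : Set A := show Set A from (T : Set (Rees F)) with hTA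
    have hel : ∀ (i : ℤ) (x : E) (hx : x ∈ F i),
        (show A from el F i x hx) ∈ Submodule.span (Polynomial k) TA := by
      intro i x hx
      rcases le_or_gt i n0 with h | h
      · have : x = 0 := by have := hbot i h ▸ hx; simpa using this
        subst this
        rw [el_zero]
        exact Submodule.zero_mem _
      rcases le_or_gt i n1 with h' | h'
      · have hsub : (s i : Set (Rees F)) ⊆ (T : Set (Rees F)) := by
          intro a ha
          exact Finset.mem_coe.mpr (Finset.mem_biUnion.mpr ⟨i, Finset.mem_Icc.mpr ⟨by omega, h'⟩, ha⟩)
        have h1 : el F i x hx ∈ Submodule.span k (s i : Set (Rees F)) := by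
          rw [hs i]; exact ⟨⟨x, hx⟩, rfl⟩
        have h2 : el F i x hx ∈ Submodule.span k ((T : Set (Rees F))) :=
          Submodule.span_mono hsub h1
        exact Submodule.span_le_restrictScalars k (Polynomial k) TA h2
      · -- i > n1 : use X-power action
        have hx1 : x ∈ F n1 := htop1 ▸ Submodule.mem_top
        set d := (i - n1).toNat with hd
        have hsm : ((X : Polynomial k) ^ d) • (show A from el F n1 x hx1)
            = (show A from el F i x hx) := by
          have h1 : ((X : Polynomial k) ^ d) • (show A from el F n1 x hx1)
              = aeval (SS F hmono) ((X : Polynomial k) ^ d) (el F n1 x hx1) := rfl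
          rw [h1, map_pow, aeval_X]
          show ((SS F hmono) ^ d) (el F n1 x hx1) = el F i x hx
          rw [SS_pow_el F hmono d n1 x hx1 (Fmono F hmono (by omega) hx1)]
          exact el_congr F (by omega) x _ hx
        rw [← hsm]
        refine Submodule.smul_mem _ _ ?_
        have hsub : (s n1 : Set (Rees F)) ⊆ (T : Set (Rees F)) := by
          intro a ha
          exact Finset.mem_coe.mpr (Finset.mem_biUnion.mpr
            ⟨n1, Finset.mem_Icc.mpr ⟨by omega, le_rfl⟩, ha⟩)
        have h1 : el F n1 x hx1 ∈ Submodule.span k (s n1 : Set (Rees F)) := by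
          rw [hs n1]; exact ⟨⟨x, hx1⟩, rfl⟩
        exact Submodule.span_le_restrictScalars k (Polynomial k) TA
          (Submodule.span_mono hsub h1)
    have hspan : Submodule.span (Polynomial k) TA = ⊤ := by
      rw [eq_top_iff]
      intro m _
      induction m using DirectSum.induction_on with
      | zero => exact Submodule.zero_mem _
      | of i x =>
        have hx : DirectSum.of (fun j => (F j : Type)) i x = el F i x.1 x.2 := by
          rw [el, ← DirectSum.lof_eq_of k]
        rw [hx]
        exact hel i x.1 x.2
      | add x y hx hy => exact Submodule.add_mem _ (hx trivial) (hy trivial)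
    exact ⟨⟨T, hspan⟩⟩
  have hnz : NoZeroSMulDivisors (Polynomial k) A := by
    refine ⟨fun {p m} h => ?_⟩
    by_contra hc
    push_neg at hc
    exact torsionfree F hmono p m hc.1 hc.2 h
  have hfree : Module.Free (Polynomial k) A := by
    exact Module.free_of_finite_type_torsion_free'
  -- the fiber
  have hevSS : ∀ u : Rees F, ev F (SS F hmono u) = ev F u :=
    fun u => LinearMap.congr_fun (ev_SS F hmono) u
  let evA : A →ₗ[k] E := ev F
  have hz : zSubOne k A = (SS F hmono - LinearMap.id) := by
    ext m
    have h1 : zSubOne k A m = aeval (SS F hmono) (X - 1 : Polynomial k) m := rfl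
    rw [h1, map_sub, aeval_X, map_one]
    rfl
  have key1 : ∀ u : Rees F,
      ev F ((SS F hmono - LinearMap.id : Rees F →ₗ[k] Rees F) u) = 0 := by
    intro u
    rw [LinearMap.sub_apply, LinearMap.id_apply, map_sub, hevSS, sub_self]
  have hker : zSubOneRange k A = LinearMap.ker evA := by
    ext m
    constructor
    · rintro ⟨u, rfl⟩
      show evA (zSubOne k A u) = 0
      rw [hz]
      exact key1 u
    · intro hm
      rw [LinearMap.mem_ker] at hm
      have hm' : ev F m = 0 := hm
      obtain ⟨u, hu⟩ := decomp F hmono n1 htop1 m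
      refine ⟨u, ?_⟩
      rw [hz]
      show (SS F hmono - LinearMap.id : Rees F →ₗ[k] Rees F) u = m
      rw [LinearMap.sub_apply, LinearMap.id_apply]
      have h0 : el F n1 (ev F m) (htop1 ▸ Submodule.mem_top) = 0 := by
        rw [el_congr' F rfl hm' (htop1 ▸ Submodule.mem_top) ((F n1).zero_mem), el_zero]
      rw [hu, h0, add_zero]
  have hsur : Function.Surjective evA :=
    fun x => ⟨el F n1 x (htop1 ▸ Submodule.mem_top), ev_el F n1 x _⟩
  have hle : zSubOneRange k A ≤ LinearMap.ker evA := le_of_eq hker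
  set L : (A ⧸ zSubOneRange k A) →ₗ[k] E := (zSubOneRange k A).liftQ evA hle with hL
  have hLbij : Function.Bijective L := by
    constructor
    · rw [← LinearMap.ker_eq_bot]
      exact Submodule.ker_liftQ_eq_bot _ _ _ (le_of_eq hker.symm)
    · rw [← LinearMap.range_eq_top, Submodule.range_liftQ]
      exact LinearMap.range_eq_top.mpr hsur
  set φ : (A ⧸ zSubOneRange k A) ≃ₗ[k] E := LinearEquiv.ofBijective L hLbij with hφ
  have hφmk : ∀ m : A, φ ((zSubOneRange k A).mkQ m) = evA m := by
    intro m
    show L ((zSubOneRange k A).mkQ m) = evA m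
    exact Submodule.liftQ_apply _ _ _
  refine ⟨A, inferInstance, inferInstance, inferInstance, inferInstance,
    fun i => MM F i, isInternal_MM F, ?_, hfin, hfree, φ, ?_⟩
  · -- X-stability
    rintro i m ⟨y, hy⟩
    have hXm : (X : Polynomial k) • m = SS F hmono m :=
      Module.AEval.of_symm_X_smul (SS F hmono) m
    rw [hXm, ← hy]
    show SS F hmono (el F i y.1 y.2) ∈ MM F (i + 1)
    rw [SS_el]
    exact ⟨⟨y.1, hmono i y.2⟩, rfl⟩
  · -- the Klyachko filtration is F
    intro i
    ext y
    simp only [klyachkoF, Submodule.mem_map]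
    constructor
    · rintro ⟨q, ⟨m, hm, rfl⟩, rfl⟩
      obtain ⟨z, rfl⟩ := hm
      rw [LinearEquiv.coe_coe]
      refine (congrArg (· ∈ F i) (hφmk _)).mpr ?_
      show ev F (el F i z.1 z.2) ∈ F i
      rw [ev_el]
      exact z.2
    · intro hy
      refine ⟨(zSubOneRange k A).mkQ (el F i y hy), ⟨el F i y hy, ⟨⟨y, hy⟩, rfl⟩, rfl⟩, ?_⟩
      rw [LinearEquiv.coe_coe]
      refine (hφmk _).trans ?_
      exact ev_el F i y hy
end

section
/- Let R be a commutative ring and let M = ⊕_i M_i and N = ⊕_i N_i be ℤ-graded modules over the polynomial ring R[z] (z homogeneous of degree 1), on each of which multiplication by z is injective. For each i let F^M_{≤i} ⊆ M/(z−1)M and F^N_{≤i} ⊆ N/(z−1)N denote the Klyachko filtrations (images of the degree-i components). Then the map sending a degree-preserving R[z]-module homomorphism ψ : M → N to the induced R-linear map M/(z−1)M → N/(z−1)N is injective, and its image is exactly the set of R-linear maps φ : M/(z−1)M → N/(z−1)N satisfying φ(F^M_{≤i}) ⊆ F^N_{≤i} for all i ∈ ℤ. (This is the full faithfulness in Klyachko's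 equivalence between 𝔾_m-equivariant vector bundles on 𝔸¹ and filtered vector spaces.) -/
open Polynomial

variable (R M : Type*) [CommRing R] [AddCommGroup M] [Module R M]
  [Module (Polynomial R) M] [IsScalarTower R (Polynomial R) M]

theorem zSubOneRange_le_comap {R M N : Type*} [CommRing R] [AddCommGroup M] [Module R M]
    [Module (Polynomial R) M] [IsScalarTower R (Polynomial R) M]
    [AddCommGroup N] [Module R N] [Module (Polynomial R) N]
    [IsScalarTower R (Polynomial R) N] (ψ : M →ₗ[Polynomial R] N) :
    zSubOneRange R M ≤ (zSubOneRange R N).comap (ψ.restrictScalars R) := by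
  rintro x ⟨m, rfl⟩
  exact ⟨ψ m, by simp [zSubOne, zSubOneRange]⟩

/-- The `R`-linear map `M/(z−1)M → N/(z−1)N` induced by an `R[z]`-linear map `ψ : M → N`. -/
noncomputable def fiberMap {R M N : Type*} [CommRing R] [AddCommGroup M] [Module R M]
    [Module (Polynomial R) M] [IsScalarTower R (Polynomial R) M]
    [AddCommGroup N] [Module R N] [Module (Polynomial R) N]
    [IsScalarTower R (Polynomial R) N] (ψ : M →ₗ[Polynomial R] N) :
    (M ⧸ zSubOneRange R M) →ₗ[R] (N ⧸ zSubOneRange R N) :=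
  Submodule.mapQ (zSubOneRange R M) (zSubOneRange R N) (ψ.restrictScalars R)
    (zSubOneRange_le_comap ψ)


section Helpers

variable {R M : Type*} [CommRing R] [AddCommGroup M] [Module R M]
  [Module (Polynomial R) M] [IsScalarTower R (Polynomial R) M]

lemma exists_sub_not_mem (s : Finset ℤ) (j : ℤ) : ∃ n : ℕ, j - (n : ℤ) ∉ s := by
  by_contra h
  push_neg at h
  exact (Set.infinite_of_injective_forall_mem
    (f := fun n : ℕ => j - (n : ℤ)) (fun a b hab => by
      have hab' : j - (a : ℤ) = j - (b : ℤ) := hab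
      omega) h) s.finite_toSet

lemma exists_add_not_mem (s : Finset ℤ) (j : ℤ) : ∃ n : ℕ, j + (n : ℤ) ∉ s := by
  by_contra h
  push_neg at h
  exact (Set.infinite_of_injective_forall_mem
    (f := fun n : ℕ => j + (n : ℤ)) (fun a b hab => by
      have hab' : j + (a : ℤ) = j + (b : ℤ) := hab
      omega) h) s.finite_toSet

lemma pow_X_smul_injective (hMinj : Function.Injective (zMul R M)) (n : ℕ) :
    Function.Injective (fun m : M => (X : Polynomial R) ^ n • m) := by
  induction n with
  | zero => intro a b h; simpa using h
  | succ n ih =>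
    intro a b h
    simp only [pow_succ, mul_smul] at h
    exact hMinj (ih h)

lemma mkQ_X_smul (m : M) :
    (zSubOneRange R M).mkQ ((X : Polynomial R) • m) = (zSubOneRange R M).mkQ m := by
  simp only [Submodule.mkQ_apply]
  refine (Submodule.Quotient.eq _).mpr ⟨m, ?_⟩
  show (X - 1 : Polynomial R) • m = (X : Polynomial R) • m - m
  rw [sub_smul, one_smul]

lemma homog_mem_zSubOneRange_eq_zero
    (ℳ : ℤ → Submodule R M) (hMint : DirectSum.IsInternal ℳ)
    (hMdeg : ∀ i : ℤ, ∀ m ∈ ℳ i, (X : Polynomial R) • m ∈ ℳ (i + 1))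
    (hMinj : Function.Injective (zMul R M))
    (i : ℤ) {m : M} (hm : m ∈ ℳ i) (hmem : m ∈ zSubOneRange R M) : m = 0 := by
  classical
  letI : DirectSum.Decomposition ℳ := hMint.chooseDecomposition
  obtain ⟨x, hx⟩ := hmem
  have hxx : (X : Polynomial R) • x - x = m := by
    rw [← show (X - 1 : Polynomial R) • x = m from hx, sub_smul, one_smul]
  set c : ℤ → M := fun j => (DirectSum.decompose ℳ x j : M) with hc
  have hcompo : ∀ (y : M) (j : ℤ),
      (DirectSum.decompose ℳ ((X : Polynomial R) • y) j : M)
        = (X : Polynomial R) • (DirectSum.decompose ℳ y (j - 1) : M) := by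
    intro y
    induction y using DirectSum.Decomposition.inductionOn ℳ with
    | zero => intro j; simp
    | @homogeneous k y =>
      intro j
      have h1 : (X : Polynomial R) • (y : M) ∈ ℳ (k + 1) := hMdeg k y y.2
      by_cases hj : j = k + 1
      · subst hj
        rw [DirectSum.decompose_of_mem_same ℳ h1,
          DirectSum.decompose_of_mem_same ℳ
            (show (y : M) ∈ ℳ (k + 1 - 1) by rw [add_sub_cancel_right]; exact y.2)]
      · rw [DirectSum.decompose_of_mem_ne ℳ h1 (fun h => hj h.symm),
          DirectSum.decompose_of_mem_ne ℳ y.2 (show k ≠ j - 1 by omega), smul_zero]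
    | add y z hy hz =>
      intro j
      rw [smul_add, DirectSum.decompose_add, DirectSum.decompose_add, DirectSum.add_apply,
        DirectSum.add_apply, Submodule.coe_add, Submodule.coe_add, hy j, hz j, smul_add]
  have hstep : ∀ j : ℤ, (X : Polynomial R) • c (j - 1) - c j = if j = i then m else 0 := by
    intro j
    have hdm : (DirectSum.decompose ℳ m j : M) = if j = i then m else 0 := by
      split
      · next h => subst h; exact DirectSum.decompose_of_mem_same ℳ hm
      · next h => exact DirectSum.decompose_of_mem_ne ℳ hm (fun h' => h h'.symm)
    calc (X : Polynomial R) • c (j - 1) - c j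
        = (DirectSum.decompose ℳ ((X : Polynomial R) • x) j : M)
            - (DirectSum.decompose ℳ x j : M) := by rw [hcompo]
      _ = (DirectSum.decompose ℳ ((X : Polynomial R) • x - x) j : M) := by
          rw [DirectSum.decompose_sub, DirectSum.sub_apply, Submodule.coe_sub]
      _ = if j = i then m else 0 := by rw [hxx]; exact hdm
  have hne : ∀ j : ℤ, j ≠ i → c j = (X : Polynomial R) • c (j - 1) := by
    intro j hj
    have := hstep j
    rw [if_neg hj, sub_eq_zero] at this
    exact this.symm
  set s : Finset ℤ := (DirectSum.decompose ℳ x).support with hs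
  have hsupp : ∀ j : ℤ, j ∉ s → c j = 0 := by
    intro j hj
    have := DFinsupp.notMem_support_iff.mp hj
    simp [hc, this]
  have hlow : ∀ n : ℕ, ∀ j : ℤ, j < i → c j = ((X : Polynomial R) ^ n) • c (j - n) := by
    intro n
    induction n with
    | zero => intro j hj; simp
    | succ n ih =>
      intro j hj
      have h1 : c j = (X : Polynomial R) • ((X : Polynomial R) ^ n • c (j - 1 - n)) := by
        rw [← ih (j - 1) (by omega), ← hne j (by omega)]
      rw [h1, ← mul_smul, ← pow_succ',
        show j - 1 - (n : ℤ) = j - ((n + 1 : ℕ) : ℤ) by push_cast; ring]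
  have hlow0 : ∀ j : ℤ, j < i → c j = 0 := by
    intro j hj
    obtain ⟨n, hn⟩ := exists_sub_not_mem s j
    rw [hlow n j hj, hsupp _ hn, smul_zero]
  have hci : m = - c i := by
    have := hstep i
    rw [if_pos rfl] at this
    rw [← this, hlow0 (i - 1) (by omega), smul_zero, zero_sub]
  have hup : ∀ n : ℕ, c (i + n) = ((X : Polynomial R) ^ n) • c i := by
    intro n
    induction n with
    | zero => simp
    | succ n ih =>
      have h1 : c (i + ((n + 1 : ℕ) : ℤ)) = (X : Polynomial R) • c (i + ((n + 1 : ℕ) : ℤ) - 1) := by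
        rw [← hne _ (by omega)]
      rw [h1, show i + ((n + 1 : ℕ) : ℤ) - 1 = i + (n : ℤ) by push_cast; ring, ih,
        ← mul_smul, ← pow_succ']
  obtain ⟨n, hn⟩ := exists_add_not_mem s i
  have h0 : ((X : Polynomial R) ^ n) • c i = 0 := by rw [← hup n, hsupp _ hn]
  have hc0 : c i = 0 := pow_X_smul_injective hMinj n (by simpa using h0)
  rw [hci, hc0, neg_zero]

lemma homog_mkQ_inj
    (ℳ : ℤ → Submodule R M) (hMint : DirectSum.IsInternal ℳ)
    (hMdeg : ∀ i : ℤ, ∀ m ∈ ℳ i, (X : Polynomial R) • m ∈ ℳ (i + 1))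
    (hMinj : Function.Injective (zMul R M))
    (i : ℤ) {m m' : M} (hm : m ∈ ℳ i) (hm' : m' ∈ ℳ i)
    (h : (zSubOneRange R M).mkQ m = (zSubOneRange R M).mkQ m') : m = m' := by
  have hmem : m - m' ∈ zSubOneRange R M := by
    simpa using (Submodule.Quotient.eq _).mp (by simpa using h)
  have := homog_mem_zSubOneRange_eq_zero ℳ hMint hMdeg hMinj i
    (Submodule.sub_mem _ hm hm') hmem
  rwa [sub_eq_zero] at this

omit [Module (Polynomial R) M] [IsScalarTower R (Polynomial R) M] in
lemma eq_on_graded {V : Type*} [AddCommGroup V] [Module R V]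
    (ℳ : ℤ → Submodule R M) (hMint : DirectSum.IsInternal ℳ)
    (f g : M →ₗ[R] V) (h : ∀ i : ℤ, ∀ m ∈ ℳ i, f m = g m) : ∀ m : M, f m = g m := by
  intro m
  have htop : iSup ℳ = ⊤ := hMint.submodule_iSup_eq_top
  have hker : (⊤ : Submodule R M) ≤ LinearMap.ker (f - g) := by
    rw [← htop]
    refine iSup_le fun i x hx => ?_
    simp [LinearMap.mem_ker, h i x hx]
  have := hker (Submodule.mem_top (x := m))
  simpa [LinearMap.mem_ker, sub_eq_zero] using this

end Helpers

/-- (Full faithfulness in Klyachko's equivalence for `𝔸¹`.)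
For `ℤ`-graded `R[z]`-modules `M, N` with injective `z`-action, the assignment sending a
degree-preserving `R[z]`-linear map `ψ : M → N` to the induced map on fibers
`M/(z−1)M → N/(z−1)N` is injective, and its image consists exactly of the `R`-linear maps
`φ` compatible with the Klyachko filtrations: `φ(F^M_{≤i}) ⊆ F^N_{≤i}` for all `i`. -/
theorem statement17 (R M N : Type*) [CommRing R] [AddCommGroup M] [Module R M]
    [Module (Polynomial R) M] [IsScalarTower R (Polynomial R) M]
    [AddCommGroup N] [Module R N] [Module (Polynomial R) N]
    [IsScalarTower R (Polynomial R) N]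
    (ℳ : ℤ → Submodule R M) (hMint : DirectSum.IsInternal ℳ)
    (hMdeg : ∀ i : ℤ, ∀ m ∈ ℳ i, (X : Polynomial R) • m ∈ ℳ (i + 1))
    (hMinj : Function.Injective (zMul R M))
    (𝒩 : ℤ → Submodule R N) (hNint : DirectSum.IsInternal 𝒩)
    (hNdeg : ∀ i : ℤ, ∀ m ∈ 𝒩 i, (X : Polynomial R) • m ∈ 𝒩 (i + 1))
    (hNinj : Function.Injective (zMul R N)) :
    Function.Injective
      (fun ψ : {ψ : M →ₗ[Polynomial R] N //
          ∀ i : ℤ, Submodule.map (ψ.restrictScalars R) (ℳ i) ≤ 𝒩 i} =>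
        fiberMap ψ.val) ∧
    ∀ φ : (M ⧸ zSubOneRange R M) →ₗ[R] (N ⧸ zSubOneRange R N),
      (∀ i : ℤ, Submodule.map φ (klyachkoF R M ℳ i) ≤ klyachkoF R N 𝒩 i) ↔
        ∃ ψ : M →ₗ[Polynomial R] N,
          (∀ i : ℤ, Submodule.map (ψ.restrictScalars R) (ℳ i) ≤ 𝒩 i) ∧
          fiberMap ψ = φ := by
  classical
  constructor
  · -- injectivity
    rintro ⟨ψ₁, hψ₁⟩ ⟨ψ₂, hψ₂⟩ h
    simp only at h
    refine Subtype.ext (LinearMap.ext (eq_on_graded ℳ hMint (ψ₁.restrictScalars R)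
      (ψ₂.restrictScalars R) ?_))
    intro i m hm
    have h1 : ψ₁ m ∈ 𝒩 i := hψ₁ i ⟨m, hm, rfl⟩
    have h2 : ψ₂ m ∈ 𝒩 i := hψ₂ i ⟨m, hm, rfl⟩
    apply homog_mkQ_inj 𝒩 hNint hNdeg hNinj i h1 h2
    have e1 : fiberMap ψ₁ ((zSubOneRange R M).mkQ m) = (zSubOneRange R N).mkQ (ψ₁ m) := by
      simp [fiberMap, Submodule.mapQ_apply]
    have e2 : fiberMap ψ₂ ((zSubOneRange R M).mkQ m) = (zSubOneRange R N).mkQ (ψ₂ m) := by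
      simp [fiberMap, Submodule.mapQ_apply]
    rw [← e1, ← e2, h]
  · intro φ
    constructor
    · intro hφ
      have key : ∀ (i : ℤ) (m : M), m ∈ ℳ i → ∃ n : N, n ∈ 𝒩 i ∧
          (zSubOneRange R N).mkQ n = φ ((zSubOneRange R M).mkQ m) := by
        intro i m hm
        have hmem : φ ((zSubOneRange R M).mkQ m) ∈ klyachkoF R N 𝒩 i :=
          hφ i ⟨(zSubOneRange R M).mkQ m, ⟨m, hm, rfl⟩, rfl⟩
        obtain ⟨n, hn, hn'⟩ := hmem
        exact ⟨n, hn, hn'⟩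
      choose g hg1 hg2 using key
      have guniq : ∀ (i : ℤ) (n : N), n ∈ 𝒩 i → ∀ (m : M) (hm : m ∈ ℳ i),
          (zSubOneRange R N).mkQ n = φ ((zSubOneRange R M).mkQ m) → g i m hm = n := by
        intro i n hn m hm h
        exact homog_mkQ_inj 𝒩 hNint hNdeg hNinj i (hg1 i m hm) hn (by rw [hg2, h])
      let ψi : ∀ i : ℤ, (ℳ i) →ₗ[R] N := fun i =>
        { toFun := fun m => g i m m.2
          map_add' := by
            intro a b
            exact guniq i _ (Submodule.add_mem _ (hg1 i a a.2) (hg1 i b b.2)) _ (a + b).2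
              (by simp [map_add, hg2])
          map_smul' := by
            intro r a
            exact guniq i _ (Submodule.smul_mem _ r (hg1 i a a.2)) _ (r • a).2
              (by simp [map_smul, hg2]) }
      let e := LinearEquiv.ofBijective (DirectSum.coeLinearMap ℳ) hMint
      let ψ₀ : M →ₗ[R] N := (DirectSum.toModule R ℤ N ψi).comp e.symm.toLinearMap
      have hψ₀ : ∀ (i : ℤ) (m : M) (hm : m ∈ ℳ i), ψ₀ m = g i m hm := by
        intro i m hm
        have hsymm : e.symm m = DirectSum.of (fun i => ℳ i) i ⟨m, hm⟩ := by
          rw [LinearEquiv.symm_apply_eq]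
          exact (DirectSum.coeLinearMap_of ℳ i ⟨m, hm⟩).symm
        show (DirectSum.toModule R ℤ N ψi) (e.symm m) = _
        rw [hsymm, ← DirectSum.lof_eq_of R, DirectSum.toModule_lof]
        rfl
      have hψ₀mem : ∀ (i : ℤ) (m : M), m ∈ ℳ i → ψ₀ m ∈ 𝒩 i := fun i m hm => by
        rw [hψ₀ i m hm]; exact hg1 i m hm
      have hψ₀mkQ : ∀ (i : ℤ) (m : M), m ∈ ℳ i →
          (zSubOneRange R N).mkQ (ψ₀ m) = φ ((zSubOneRange R M).mkQ m) := fun i m hm => by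
        rw [hψ₀ i m hm]; exact hg2 i m hm
      have hX : ∀ m : M, ψ₀ ((X : Polynomial R) • m) = (X : Polynomial R) • ψ₀ m := by
        have hgr := eq_on_graded ℳ hMint (ψ₀.comp (zMul R M)) ((zMul R N).comp ψ₀) ?_
        · intro m; exact hgr m
        intro i m hm
        show ψ₀ ((X : Polynomial R) • m) = (X : Polynomial R) • ψ₀ m
        apply homog_mkQ_inj 𝒩 hNint hNdeg hNinj (i + 1) (hψ₀mem (i + 1) _ (hMdeg i m hm))
          (hNdeg i _ (hψ₀mem i m hm))
        rw [hψ₀mkQ (i + 1) _ (hMdeg i m hm), mkQ_X_smul, mkQ_X_smul, hψ₀mkQ i m hm]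
      have hsmul : ∀ (p : Polynomial R) (m : M), ψ₀ (p • m) = p • ψ₀ m := by
        intro p
        induction p using Polynomial.induction_on with
        | C a =>
          intro m
          rw [← Polynomial.algebraMap_eq, algebraMap_smul, algebraMap_smul, map_smul]
        | add p q hp hq =>
          intro m
          rw [add_smul, add_smul, map_add, hp, hq]
        | monomial n a ih =>
          intro m
          calc ψ₀ ((C a * X ^ (n + 1) : Polynomial R) • m)
              = ψ₀ ((C a * X ^ n : Polynomial R) • ((X : Polynomial R) • m)) := by
                rw [← mul_smul, pow_succ, mul_assoc]
            _ = (C a * X ^ n : Polynomial R) • ((X : Polynomial R) • ψ₀ m) := by rw [ih, hX]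
            _ = (C a * X ^ (n + 1) : Polynomial R) • ψ₀ m := by
                rw [← mul_smul, pow_succ, mul_assoc]
      let ψ : M →ₗ[Polynomial R] N :=
        { toFun := ψ₀, map_add' := ψ₀.map_add, map_smul' := fun p m => hsmul p m }
      refine ⟨ψ, fun i => ?_, ?_⟩
      · rintro n ⟨m, hm, rfl⟩
        exact hψ₀mem i m hm
      · refine Submodule.linearMap_qext _ (LinearMap.ext fun m => ?_)
        have hgr := eq_on_graded ℳ hMint ((zSubOneRange R N).mkQ ∘ₗ (ψ.restrictScalars R))
          (φ ∘ₗ (zSubOneRange R M).mkQ) (fun i m hm => hψ₀mkQ i m hm) m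
        simpa [fiberMap, Submodule.mapQ_apply] using hgr
    · rintro ⟨ψ, hψ, rfl⟩ i
      rintro y ⟨u, hu, rfl⟩
      obtain ⟨m, hm, rfl⟩ := hu
      refine ⟨ψ m, hψ i ⟨m, hm, rfl⟩, ?_⟩
      simp [fiberMap, Submodule.mapQ_apply]
end
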